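/- arXiv:2304.08335 — 3 statements merged into one kernel-verified Lean document; each statement's English description precedes it below -/
import Mathlib

section
/- Let B > 1, m ≥ 1, and let real numbers a < b ≤ 0 be given. Let (P_i^{(t)}), for 1 ≤ i ≤ m and t ≥ 1, be i.i.d. random variables valued in (0,1) such that log_B P_i^{(t)} is uniformly distributed on (a,b). Fix initial side lengths P_i^{(0)} > 0 and set S_i^{(n)} = ∏_{t=0}^n P_i^{(t)}. Then the frame perimeters V_1^{(n)} = 2^{m−1} · Σ_{i=1}^m S_i^{(n)} converge to strong Benford behavior base B as n → ∞. -/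
open MeasureTheory ProbabilityTheory Filter Set
open scoped ENNReal NNReal

namespace BenfordCor

/-! ### Auxiliary measure-theoretic lemmas -/

/-- Shifting by a uniform random variable on an interval of length one exactly
uniformizes the fractional part. -/
lemma fract_shift (A : Set ℝ) (hA : MeasurableSet A) (c : ℝ) :
    (volume.restrict (Ico (0:ℝ) 1)) {s | Int.fract (c + s) ∈ A} = volume (A ∩ Ico 0 1) := by
  have hmf : Measurable fun s : ℝ => Int.fract (c + s) :=
    (measurable_const.add measurable_id).fract
  have hT : MeasurableSet {s : ℝ | Int.fract (c + s) ∈ A} := hmf hA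
  rw [Measure.restrict_apply hT]
  set θ := Int.fract c with hθdef
  have hθ0 : 0 ≤ θ := Int.fract_nonneg c
  have hθ1 : θ < 1 := Int.fract_lt_one c
  have key : ∀ s : ℝ, Int.fract (c + s) = Int.fract (θ + s) := by
    intro s
    conv_lhs => rw [show c + s = θ + s + (⌊c⌋ : ℤ) by
      rw [hθdef, Int.fract]; push_cast; ring]
    rw [Int.fract_add_intCast]
  have hset : {s : ℝ | Int.fract (c + s) ∈ A} = {s : ℝ | Int.fract (θ + s) ∈ A} := by
    ext s; simp only [mem_setOf_eq, key s]
  rw [hset]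
  have hsplit : Ico (0:ℝ) 1 = Ico 0 (1-θ) ∪ Ico (1-θ) 1 :=
    (Ico_union_Ico_eq_Ico (by linarith) (by linarith)).symm
  have h1 : {s : ℝ | Int.fract (θ + s) ∈ A} ∩ Ico 0 (1-θ)
      = (fun s => θ + s) ⁻¹' (A ∩ Ico θ 1) := by
    ext s
    simp only [mem_inter_iff, mem_setOf_eq, mem_Ico, mem_preimage]
    constructor
    · rintro ⟨hfA, hs0, hs1⟩
      have hfr : Int.fract (θ + s) = θ + s := Int.fract_eq_self.2 ⟨by linarith, by linarith⟩
      exact ⟨by rwa [hfr] at hfA, by constructor <;> linarith⟩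
    · rintro ⟨hfA, hθs, hs1⟩
      have hfr : Int.fract (θ + s) = θ + s := Int.fract_eq_self.2 ⟨by linarith, by linarith⟩
      exact ⟨by rwa [hfr], by constructor <;> linarith⟩
  have h2 : {s : ℝ | Int.fract (θ + s) ∈ A} ∩ Ico (1-θ) 1
      = (fun s => (θ - 1) + s) ⁻¹' (A ∩ Ico 0 θ) := by
    ext s
    simp only [mem_inter_iff, mem_setOf_eq, mem_Ico, mem_preimage]
    have he0 : Int.fract (θ + s) = Int.fract (θ - 1 + s) := by
      rw [show θ + s = (θ - 1 + s) + ((1:ℤ):ℝ) by push_cast; ring, Int.fract_add_intCast]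
    constructor
    · rintro ⟨hfA, hs0, hs1⟩
      have hfr : Int.fract (θ - 1 + s) = θ - 1 + s :=
        Int.fract_eq_self.2 ⟨by linarith, by linarith⟩
      refine ⟨by rw [he0, hfr] at hfA; exact hfA, by constructor <;> linarith⟩
    · rintro ⟨hfA, hθs, hs1⟩
      have hfr : Int.fract (θ - 1 + s) = θ - 1 + s :=
        Int.fract_eq_self.2 ⟨by linarith, by linarith⟩
      refine ⟨by rw [he0, hfr]; exact hfA, by constructor <;> linarith⟩
  have hTθ : MeasurableSet {s : ℝ | Int.fract (θ + s) ∈ A} :=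
    ((measurable_const.add measurable_id).fract) hA
  rw [hsplit, inter_union_distrib_left, measure_union
    (((Ico_disjoint_Ico_same (a := (0:ℝ)) (b := 1-θ) (c := 1)).mono
      inter_subset_right inter_subset_right))
    (hTθ.inter measurableSet_Ico), h1, h2, measure_preimage_add, measure_preimage_add]
  rw [← measure_union (((Ico_disjoint_Ico_same (a := (0:ℝ)) (b := θ) (c := 1)).mono
      inter_subset_right inter_subset_right).symm) (hA.inter measurableSet_Ico)]
  congr 1
  rw [union_comm, ← inter_union_distrib_left, Ico_union_Ico_eq_Ico hθ0 (le_of_lt hθ1),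
    Ico_union_Ico_eq_Ico (by linarith : (0:ℝ) ≤ 1 - θ) (by linarith : 1 - θ ≤ (1:ℝ))]

/-! ### The setting -/

/-- The uniform probability measure on `(a, b)`. -/
noncomputable def unif (a b : ℝ) : Measure ℝ :=
  (ENNReal.ofReal (b - a))⁻¹ • volume.restrict (Ioo a b)

lemma unif_prob {a b : ℝ} (hab : a < b) : IsProbabilityMeasure (unif a b) := by
  constructor
  rw [unif, Measure.smul_apply, Measure.restrict_apply MeasurableSet.univ, univ_inter,
    Real.volume_Ioo, smul_eq_mul, ENNReal.inv_mul_cancel (by simp [hab]) ENNReal.ofReal_ne_top]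

/-- The product of uniform measures as a multiple of restricted Lebesgue measure. -/
lemma pi_unif_eq {ι : Type*} [Fintype ι] {c d : ℝ} (hcd : c < d) :
    (Measure.pi fun _ : ι => unif c d) =
      ((ENNReal.ofReal (d - c))⁻¹) ^ (Fintype.card ι) •
        (Measure.pi fun _ : ι => (volume : Measure ℝ)).restrict (univ.pi fun _ => Ioo c d) := by
  haveI : SigmaFinite (unif c d) := by
    haveI := unif_prob hcd; infer_instance
  refine Measure.pi_eq fun s hs => ?_
  rw [Measure.smul_apply, Measure.restrict_apply (MeasurableSet.univ_pi hs),
    ← pi_inter_distrib, Measure.pi_pi, smul_eq_mul]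
  have hx : ∀ i, unif c d (s i) = (ENNReal.ofReal (d - c))⁻¹ * volume (s i ∩ Ioo c d) := by
    intro i
    rw [unif, Measure.smul_apply, Measure.restrict_apply (hs i), smul_eq_mul]
  rw [Finset.prod_congr rfl fun i _ => hx i, Finset.prod_mul_distrib, Finset.prod_const,
    Finset.card_univ]

/-- The deterministic function taking the vector of log-sizes to the log of the perimeter. -/
noncomputable def hfun (B : ℝ) (m : ℕ) (P0 : Fin m → ℝ) : (Fin m → ℝ) → ℝ :=
  fun y => Real.logb B ((2:ℝ) ^ (m-1) * ∑ i, P0 i * B ^ (y i))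

/-- Sum along rows. -/
noncomputable def colsum (m n : ℕ) (x : Fin m × Fin n → ℝ) : Fin m → ℝ := fun i => ∑ t, x (i, t)

lemma colsum_meas (m n : ℕ) : Measurable (colsum m n) := by
  apply measurable_pi_lambda
  exact fun i => Finset.measurable_sum _ fun t _ => measurable_pi_apply _

variable {B : ℝ} {m K : ℕ} {a b : ℝ} {P0 : Fin m → ℝ}

lemma hfun_arg_pos (hB : 1 < B) (hm : 1 ≤ m) (hP0 : ∀ i, 0 < P0 i) (y : Fin m → ℝ) :
    0 < (2:ℝ) ^ (m-1) * ∑ i, P0 i * B ^ (y i) := by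
  have hB0 : (0:ℝ) < B := lt_trans one_pos hB
  apply mul_pos (by positivity)
  have : Nonempty (Fin m) := Fin.pos_iff_nonempty.1 hm
  apply Finset.sum_pos (fun i _ => mul_pos (hP0 i) (Real.rpow_pos_of_pos hB0 _))
    Finset.univ_nonempty

lemma hfun_shift (hB : 1 < B) (hm : 1 ≤ m) (hP0 : ∀ i, 0 < P0 i) (y : Fin m → ℝ) (s : ℝ) :
    hfun B m P0 (fun i => y i + s) = hfun B m P0 y + s := by
  have hB0 : (0:ℝ) < B := lt_trans one_pos hB
  have h1 : ∀ i ∈ Finset.univ, P0 i * B ^ (y i + s) = (P0 i * B ^ (y i)) * B ^ s :=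
    fun i _ => by rw [Real.rpow_add hB0]; ring
  have h2 : hfun B m P0 (fun i => y i + s)
      = Real.logb B (((2:ℝ) ^ (m-1) * ∑ i, P0 i * B ^ (y i)) * B ^ s) := by
    rw [hfun]
    congr 1
    rw [Finset.sum_congr rfl h1, ← Finset.sum_mul]
    ring
  rw [h2, Real.logb_mul (ne_of_gt (hfun_arg_pos hB hm hP0 y))
    (ne_of_gt (Real.rpow_pos_of_pos hB0 s)), Real.logb_rpow hB0 (ne_of_gt hB), hfun]

lemma hfun_meas (hB : 1 < B) : Measurable (hfun B m P0) := by
  have hB0 : (0:ℝ) < B := lt_trans one_pos hB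
  unfold hfun
  simp only [Real.logb]
  apply Measurable.div_const
  apply Real.measurable_log.comp
  apply Measurable.const_mul
  apply Finset.measurable_sum
  intro i _
  apply Measurable.const_mul
  have hrw : (fun y : Fin m → ℝ => B ^ (y i)) = fun y => Real.exp (Real.log B * y i) := by
    funext y; rw [Real.rpow_def_of_pos hB0]
  rw [hrw]
  exact Real.measurable_exp.comp ((measurable_pi_apply i).const_mul _)

/-- The event appearing throughout. -/
def EvSet (B : ℝ) (m : ℕ) (P0 : Fin m → ℝ) (n : ℕ) (y0 : Fin m → ℝ) (A : Set ℝ) :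
    Set (Fin m × Fin n → ℝ) :=
  {x | Int.fract (hfun B m P0 (fun i => y0 i + colsum m n x i)) ∈ A}

lemma EvSet_meas (hB : 1 < B) (n : ℕ) (y0 : Fin m → ℝ) {A : Set ℝ} (hA : MeasurableSet A) :
    MeasurableSet (EvSet B m P0 n y0 A) := by
  have hy : Measurable fun (x : Fin m × Fin n → ℝ) (i : Fin m) => y0 i + colsum m n x i := by
    apply measurable_pi_lambda
    exact fun i => measurable_const.add ((measurable_pi_apply i).comp (colsum_meas m n))
  exact (((hfun_meas hB).comp hy).fract) hA

/-- The diagonal shear map. -/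
noncomputable def Fdiag (m K : ℕ) : ((Fin m × Fin K → ℝ) × ℝ) → (Fin m × Fin K → ℝ) :=
  fun p q => p.1 q + p.2 / K

lemma Fdiag_meas (m K : ℕ) : Measurable (Fdiag m K) := by
  apply measurable_pi_lambda
  exact fun q => ((measurable_pi_apply q).comp measurable_fst).add (measurable_snd.div_const _)

lemma colsum_Fdiag (hK : 1 ≤ K) (g : Fin m × Fin K → ℝ) (s : ℝ) (i : Fin m) :
    colsum m K (Fdiag m K (g, s)) i = colsum m K g i + s := by
  have hK0 : (K:ℝ) ≠ 0 := Nat.cast_ne_zero.2 (by omega)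
  unfold colsum Fdiag
  rw [Finset.sum_add_distrib, Finset.sum_const, Finset.card_univ, Fintype.card_fin,
    nsmul_eq_mul]
  rw [mul_div_cancel₀ _ hK0]

/-- The diagonal part measure. -/
noncomputable def gam (m K : ℕ) (a b : ℝ) : Measure (Fin m × Fin K → ℝ) :=
  ((Measure.pi fun _ : Fin m × Fin K => unif a (b - 1/(K:ℝ))).prod
    (volume.restrict (Ico (0:ℝ) 1))).map (Fdiag m K)

/-- The weight of the diagonal part. -/
noncomputable def eps (m K : ℕ) (a b : ℝ) : ℝ≥0∞ :=
  (ENNReal.ofReal ((b - 1/(K:ℝ) - a)/(b - a))) ^ (m * K)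

lemma eps_le_one (hab : a < b) : eps m K a b ≤ 1 := by
  apply pow_le_one'
  apply ENNReal.ofReal_le_one.2
  apply div_le_one_of_le₀ ?_ (by linarith)
  have : (0:ℝ) ≤ 1/(K:ℝ) := by positivity
  linarith

lemma eps_pos (hm : 1 ≤ m) (hK : 1 ≤ K) (hab : a < b) (hKd : 1/(K:ℝ) ≤ (b-a)/2) :
    0 < eps m K a b := by
  have hnum : 0 < b - 1/(K:ℝ) - a := by linarith
  have : (0:ℝ) < (b - 1/(K:ℝ) - a)/(b - a) := by
    apply div_pos hnum (by linarith)
  exact ENNReal.pow_pos (ENNReal.ofReal_pos.2 this) _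

lemma hab' (hK : 1 ≤ K) (hab : a < b) (hKd : 1/(K:ℝ) ≤ (b-a)/2) : a < b - 1/(K:ℝ) := by
  have h0 : (0:ℝ) < 1/(K:ℝ) := by
    have : (0:ℝ) < (K:ℝ) := by exact_mod_cast Nat.pos_of_ne_zero (by omega)
    positivity
  linarith

lemma u01_prob : IsProbabilityMeasure (volume.restrict (Ico (0:ℝ) 1)) := by
  constructor
  rw [Measure.restrict_apply MeasurableSet.univ, univ_inter, Real.volume_Ico]
  simp

lemma gam_prob (hm : 1 ≤ m) (hK : 1 ≤ K) (hab : a < b) (hKd : 1/(K:ℝ) ≤ (b-a)/2) :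
    IsProbabilityMeasure (gam m K a b) := by
  haveI : IsProbabilityMeasure (unif a (b - 1/(K:ℝ))) := unif_prob (hab' hK hab hKd)
  haveI := u01_prob
  exact Measure.isProbabilityMeasure_map (Fdiag_meas m K).aemeasurable

/-- Key domination: the block product measure dominates `eps` times the diagonal measure. -/
lemma dom (hm : 1 ≤ m) (hK : 1 ≤ K) (hab : a < b) (hKd : 1/(K:ℝ) ≤ (b-a)/2) :
    eps m K a b • gam m K a b ≤ Measure.pi fun _ : Fin m × Fin K => unif a b := by
  have habK : a < b - 1/(K:ℝ) := hab' hK hab hKd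
  haveI : IsProbabilityMeasure (unif a (b - 1/(K:ℝ))) := unif_prob habK
  haveI : IsProbabilityMeasure (unif a b) := unif_prob hab
  have hKpos : (0:ℝ) < (K:ℝ) := by exact_mod_cast Nat.pos_of_ne_zero (by omega)
  have hδpos : (0:ℝ) < b - a := by linarith
  have hδ'pos : (0:ℝ) < b - 1/(K:ℝ) - a := by linarith
  rw [Measure.le_iff]
  intro A hA
  have hcard : Fintype.card (Fin m × Fin K) = m * K := by simp
  set Vol := Measure.pi fun _ : Fin m × Fin K => (volume : Measure ℝ) with hVol
  set cube : Set (Fin m × Fin K → ℝ) := univ.pi fun _ => Ioo a b with hcube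
  set cube' : Set (Fin m × Fin K → ℝ) := univ.pi fun _ => Ioo a (b - 1/(K:ℝ)) with hcube'
  -- compute the right-hand side
  have hrhs : (Measure.pi fun _ : Fin m × Fin K => unif a b) A
      = ((ENNReal.ofReal (b - a))⁻¹) ^ (m*K) * Vol (A ∩ cube) := by
    rw [pi_unif_eq hab, hcard, Measure.smul_apply, Measure.restrict_apply hA, smul_eq_mul]
  -- bound the left-hand side
  have key : ∀ s : ℝ, s ∈ Ico (0:ℝ) 1 →
      (Measure.pi fun _ : Fin m × Fin K => unif a (b - 1/(K:ℝ)))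
        ((fun g => (g, s)) ⁻¹' (Fdiag m K ⁻¹' A))
      ≤ ((ENNReal.ofReal (b - 1/(K:ℝ) - a))⁻¹) ^ (m*K) * Vol (A ∩ cube) := by
    intro s hs
    rw [pi_unif_eq habK, hcard, Measure.smul_apply, smul_eq_mul]
    apply mul_le_mul_right ?_ _
    rw [Measure.restrict_apply (measurable_prodMk_right ((Fdiag_meas m K) hA))]
    set w : Fin m × Fin K → ℝ := fun _ => s / (K:ℝ) with hw
    have hFd : (fun g : Fin m × Fin K → ℝ => (g, s)) ⁻¹' (Fdiag m K ⁻¹' A)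
        = (fun g => g + w) ⁻¹' A := by
      ext g; simp only [mem_preimage]; rfl
    rw [hFd]
    have hsub : ((fun g => g + w) ⁻¹' A) ∩ cube' ⊆ (fun g => g + w) ⁻¹' (A ∩ cube) := by
      rintro g ⟨hgA, hgc⟩
      refine ⟨hgA, fun q _ => ?_⟩
      have hq := hgc q (mem_univ q)
      simp only [mem_Ioo] at hq ⊢
      have h0 : 0 ≤ s / (K:ℝ) := div_nonneg hs.1 (le_of_lt hKpos)
      have h1 : s / (K:ℝ) ≤ 1 / (K:ℝ) := by gcongr; exact le_of_lt hs.2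
      constructor
      · simp only [Pi.add_apply, hw]; linarith [hq.1]
      · simp only [Pi.add_apply, hw]; linarith [hq.2]
    calc Vol (((fun g => g + w) ⁻¹' A) ∩ cube') ≤ Vol ((fun g => g + w) ⁻¹' (A ∩ cube)) :=
          measure_mono hsub
      _ = Vol (A ∩ cube) := by
          rw [show (fun g : Fin m × Fin K → ℝ => g + w) = (fun g => w + g) from
            funext fun g => add_comm g w]
          exact measure_preimage_add Vol w _
  -- put it together
  rw [Measure.smul_apply, hrhs]
  have hgA : gam m K a b A
      ≤ ((ENNReal.ofReal (b - 1/(K:ℝ) - a))⁻¹) ^ (m*K) * Vol (A ∩ cube) := by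
    rw [gam, Measure.map_apply (Fdiag_meas m K) hA,
      Measure.prod_apply_symm ((Fdiag_meas m K) hA)]
    calc ∫⁻ s, (Measure.pi fun _ : Fin m × Fin K => unif a (b - 1/(K:ℝ)))
          ((fun g => (g, s)) ⁻¹' (Fdiag m K ⁻¹' A)) ∂(volume.restrict (Ico (0:ℝ) 1))
        ≤ ∫⁻ _, ((ENNReal.ofReal (b - 1/(K:ℝ) - a))⁻¹) ^ (m*K) * Vol (A ∩ cube)
            ∂(volume.restrict (Ico (0:ℝ) 1)) := by
          apply lintegral_mono_ae
          rw [ae_restrict_iff' measurableSet_Ico]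
          exact ae_of_all _ key
      _ = ((ENNReal.ofReal (b - 1/(K:ℝ) - a))⁻¹) ^ (m*K) * Vol (A ∩ cube) := by
          haveI := u01_prob
          rw [lintegral_const, measure_univ, mul_one]
  calc eps m K a b * gam m K a b A
      ≤ eps m K a b * (((ENNReal.ofReal (b - 1/(K:ℝ) - a))⁻¹) ^ (m*K) * Vol (A ∩ cube)) :=
        mul_le_mul_right hgA _
    _ = ((ENNReal.ofReal (b - a))⁻¹) ^ (m*K) * Vol (A ∩ cube) := by
        rw [← mul_assoc, eps, ← mul_pow]
        congr 2
        rw [ENNReal.ofReal_div_of_pos hδpos, div_eq_mul_inv, mul_comm,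
          ← mul_assoc]
        have hne : ENNReal.ofReal (b - 1/(K:ℝ) - a) ≠ 0 := by
          simp only [ne_eq, ENNReal.ofReal_eq_zero, not_le]; linarith
        rw [ENNReal.inv_mul_cancel hne ENNReal.ofReal_ne_top, one_mul]

/-- The main engine: iterated mixture bound. -/
lemma engine (hB : 1 < B) (hm : 1 ≤ m) (hK : 1 ≤ K) (hab : a < b)
    (hKd : 1/(K:ℝ) ≤ (b-a)/2) (hP0 : ∀ i, 0 < P0 i) (A : Set ℝ) (hA : MeasurableSet A) :
    ∀ (n : ℕ) (y0 : Fin m → ℝ),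
    (1 - (1 - eps m K a b) ^ (n / K)) * volume (A ∩ Ico 0 1) ≤
      (Measure.pi fun _ : Fin m × Fin n => unif a b) (EvSet B m P0 n y0 A) := by
  haveI hu : IsProbabilityMeasure (unif a b) := unif_prob hab
  haveI hu' : IsProbabilityMeasure (unif a (b - 1/(K:ℝ))) := unif_prob (hab' hK hab hKd)
  haveI := u01_prob
  haveI hgamP : IsProbabilityMeasure (gam m K a b) := gam_prob hm hK hab hKd
  set ε := eps m K a b with hεdef
  set L := volume (A ∩ Ico (0:ℝ) 1) with hLdef
  intro n
  induction n using Nat.strong_induction_on with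
  | _ n IH =>
    intro y0
    by_cases hn : n < K
    · rw [Nat.div_eq_of_lt hn, pow_zero, tsub_self, zero_mul]
      exact zero_le
    · push_neg at hn
      obtain ⟨n', rfl⟩ : ∃ n', n = K + n' := ⟨n - K, by omega⟩
      have hdiv : (K + n') / K = n' / K + 1 := by
        rw [add_comm, Nat.add_div_right _ (by omega)]
      set e : (Fin m × Fin K) ⊕ (Fin m × Fin n') ≃ Fin m × Fin (K + n') :=
        (Equiv.prodSumDistrib (Fin m) (Fin K) (Fin n')).symm.trans
          ((Equiv.refl (Fin m)).prodCongr finSumFinEquiv) with hedef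
      set Φ : (Fin m × Fin K → ℝ) × (Fin m × Fin n' → ℝ) → (Fin m × Fin (K + n') → ℝ) :=
        fun p => (MeasurableEquiv.piCongrLeft (fun _ : Fin m × Fin (K+n') => ℝ) e)
          ((MeasurableEquiv.sumPiEquivProdPi (fun _ => ℝ)).symm p) with hΦdef
      have MP : MeasurePreserving Φ
          ((Measure.pi fun _ : Fin m × Fin K => unif a b).prod
            (Measure.pi fun _ : Fin m × Fin n' => unif a b))
          (Measure.pi fun _ : Fin m × Fin (K + n') => unif a b) := by
        have h1 := measurePreserving_sumPiEquivProdPi_symm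
          (fun _ : (Fin m × Fin K) ⊕ (Fin m × Fin n') => unif a b)
        have h2 := measurePreserving_piCongrLeft (fun _ : Fin m × Fin (K + n') => unif a b) e
        exact h2.comp h1
      have hinl : ∀ (p : (Fin m × Fin K → ℝ) × (Fin m × Fin n' → ℝ)) (q : Fin m × Fin K),
          Φ p (e (Sum.inl q)) = p.1 q := by
        intro p q
        show (Equiv.piCongrLeft (fun _ => ℝ) e)
          ((Equiv.sumPiEquivProdPi (fun _ => ℝ)).symm (p.1, p.2)) (e (Sum.inl q)) = p.1 q
        exact Equiv.piCongrLeft_sumInl (fun _ => ℝ) e p.1 p.2 q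
      have hinr : ∀ (p : (Fin m × Fin K → ℝ) × (Fin m × Fin n' → ℝ)) (q : Fin m × Fin n'),
          Φ p (e (Sum.inr q)) = p.2 q := by
        intro p q
        show (Equiv.piCongrLeft (fun _ => ℝ) e)
          ((Equiv.sumPiEquivProdPi (fun _ => ℝ)).symm (p.1, p.2)) (e (Sum.inr q)) = p.2 q
        exact Equiv.piCongrLeft_sumInr (fun _ => ℝ) e p.1 p.2 q
      have hidx1 : ∀ (i : Fin m) (t : Fin K), e (Sum.inl (i, t)) = (i, Fin.castAdd n' t) := by
        intro i t
        simp [hedef, finSumFinEquiv]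
      have hidx2 : ∀ (i : Fin m) (t : Fin n'), e (Sum.inr (i, t)) = (i, Fin.natAdd K t) := by
        intro i t
        simp [hedef, finSumFinEquiv]
      have hcol : ∀ (p : (Fin m × Fin K → ℝ) × (Fin m × Fin n' → ℝ)) (i : Fin m),
          colsum m (K + n') (Φ p) i = colsum m K p.1 i + colsum m n' p.2 i := by
        intro p i
        unfold colsum
        rw [Fin.sum_univ_add (f := fun t => Φ p (i, t))]
        congr 1
        · exact Finset.sum_congr rfl fun t _ => by rw [← hidx1 i t, hinl]
        · exact Finset.sum_congr rfl fun t _ => by rw [← hidx2 i t, hinr]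
      set S' : Set ((Fin m × Fin K → ℝ) × (Fin m × Fin n' → ℝ)) :=
        {p | Int.fract (hfun B m P0
          (fun i => y0 i + (colsum m K p.1 i + colsum m n' p.2 i))) ∈ A} with hS'def
      have hS'meas : MeasurableSet S' := by
        apply (((hfun_meas hB).comp ?_).fract) hA
        apply measurable_pi_lambda
        intro i
        apply measurable_const.add
        exact (((measurable_pi_apply i).comp (colsum_meas m K)).comp measurable_fst).add
          (((measurable_pi_apply i).comp (colsum_meas m n')).comp measurable_snd)
      have hpre : Φ ⁻¹' (EvSet B m P0 (K + n') y0 A) = S' := by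
        ext p
        simp only [EvSet, mem_preimage, mem_setOf_eq, hS'def]
        rw [show (fun i => y0 i + colsum m (K+n') (Φ p) i)
          = (fun i => y0 i + (colsum m K p.1 i + colsum m n' p.2 i)) from
          funext fun i => by rw [hcol]]
      have hslice : ∀ g : Fin m × Fin K → ℝ,
          Prod.mk g ⁻¹' S' = EvSet B m P0 n' (fun i => y0 i + colsum m K g i) A := by
        intro g
        ext x
        simp only [hS'def, EvSet, mem_preimage, mem_setOf_eq, add_assoc]
      rw [← MP.measure_preimage (EvSet_meas hB _ _ hA).nullMeasurableSet, hpre,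
        Measure.prod_apply hS'meas]
      set f : (Fin m × Fin K → ℝ) → ℝ≥0∞ :=
        fun g => (Measure.pi fun _ : Fin m × Fin n' => unif a b) (Prod.mk g ⁻¹' S') with hfdef
      have hfmeas : Measurable f := measurable_measure_prodMk_left hS'meas
      haveI : IsFiniteMeasure (ε • gam m K a b) := by
        constructor
        rw [Measure.smul_apply, measure_univ, smul_eq_mul, mul_one]
        exact lt_of_le_of_lt (eps_le_one hab) ENNReal.one_lt_top
      have hsub : (Measure.pi fun _ : Fin m × Fin K => unif a b)
          = ((Measure.pi fun _ : Fin m × Fin K => unif a b) - ε • gam m K a b)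
            + ε • gam m K a b :=
        (Measure.sub_add_cancel_of_le (dom hm hK hab hKd)).symm
      have hdec : ∫⁻ g, f g ∂(Measure.pi fun _ : Fin m × Fin K => unif a b)
          = ∫⁻ g, f g ∂((Measure.pi fun _ : Fin m × Fin K => unif a b) - ε • gam m K a b)
            + ε * ∫⁻ g, f g ∂(gam m K a b) := by
        conv_lhs => rw [hsub]
        rw [lintegral_add_measure, lintegral_smul_measure, smul_eq_mul]
      have hgamterm : ∫⁻ g, f g ∂(gam m K a b) = L := by
        rw [gam, lintegral_map hfmeas (Fdiag_meas m K),
          MeasureTheory.lintegral_prod (fun z => f (Fdiag m K z))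
            ((hfmeas.comp (Fdiag_meas m K)).aemeasurable)]
        have hinner : ∀ g', ∫⁻ s, f (Fdiag m K (g', s))
            ∂(volume.restrict (Ico (0:ℝ) 1)) = L := by
          intro g'
          have hceq : ∀ s : ℝ, f (Fdiag m K (g', s))
              = (Measure.pi fun _ : Fin m × Fin n' => unif a b)
              {x | Int.fract ((hfun B m P0
                 (fun i => y0 i + (colsum m K g' i + colsum m n' x i))) + s) ∈ A} := by
            intro s
            have hset : Prod.mk (Fdiag m K (g', s)) ⁻¹' S'
                = {x : Fin m × Fin n' → ℝ | Int.fract ((hfun B m P0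
                  (fun i => y0 i + (colsum m K g' i + colsum m n' x i))) + s) ∈ A} := by
              ext x
              simp only [hS'def, mem_preimage, mem_setOf_eq]
              rw [show (fun i => y0 i + (colsum m K (Fdiag m K (g', s)) i + colsum m n' x i))
                = (fun i => (y0 i + (colsum m K g' i + colsum m n' x i)) + s) from
                funext fun i => by rw [colsum_Fdiag hK]; ring,
                hfun_shift hB hm hP0]
            show (Measure.pi fun _ : Fin m × Fin n' => unif a b)
              (Prod.mk (Fdiag m K (g', s)) ⁻¹' S') = _
            rw [hset]
          set T : Set (ℝ × (Fin m × Fin n' → ℝ)) :=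
            {r | Int.fract ((hfun B m P0
              (fun i => y0 i + (colsum m K g' i + colsum m n' r.2 i))) + r.1) ∈ A} with hTdef
          have hTmeas : MeasurableSet T := by
            apply (Measurable.fract ?_) hA
            apply Measurable.add ?_ measurable_fst
            apply (hfun_meas hB).comp
            apply measurable_pi_lambda
            intro i
            apply measurable_const.add
            apply measurable_const.add
            exact ((measurable_pi_apply i).comp (colsum_meas m n')).comp measurable_snd
          calc ∫⁻ s, f (Fdiag m K (g', s)) ∂(volume.restrict (Ico (0:ℝ) 1))
              = ∫⁻ s, (Measure.pi fun _ : Fin m × Fin n' => unif a b)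
                  (Prod.mk s ⁻¹' T) ∂(volume.restrict (Ico (0:ℝ) 1)) := by
                apply lintegral_congr
                intro s
                rw [hceq s]
                rfl
            _ = ((volume.restrict (Ico (0:ℝ) 1)).prod
                  (Measure.pi fun _ : Fin m × Fin n' => unif a b)) T :=
                (Measure.prod_apply hTmeas).symm
            _ = ∫⁻ x, (volume.restrict (Ico (0:ℝ) 1)) ((fun s => (s, x)) ⁻¹' T)
                  ∂(Measure.pi fun _ : Fin m × Fin n' => unif a b) :=
                Measure.prod_apply_symm hTmeas
            _ = ∫⁻ _x, L ∂(Measure.pi fun _ : Fin m × Fin n' => unif a b) := by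
                apply lintegral_congr
                intro x
                exact fract_shift A hA (hfun B m P0
                  (fun i => y0 i + (colsum m K g' i + colsum m n' x i)))
            _ = L := by rw [lintegral_const, measure_univ, mul_one]
        rw [lintegral_congr hinner, lintegral_const, measure_univ, mul_one]
      have hIH : ∀ g, (1 - (1 - ε) ^ (n' / K)) * L ≤ f g := by
        intro g
        rw [hfdef]
        simp only []
        rw [hslice g]
        exact IH n' (by omega) (fun i => y0 i + colsum m K g i)
      have hremuniv : ((Measure.pi fun _ : Fin m × Fin K => unif a b) - ε • gam m K a b) univ
          = 1 - ε := by
        rw [Measure.sub_apply MeasurableSet.univ (dom hm hK hab hKd), measure_univ,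
          Measure.smul_apply, measure_univ, smul_eq_mul, mul_one]
      have hrem : (1 - (1 - ε) ^ (n' / K)) * L * (1 - ε)
          ≤ ∫⁻ g, f g ∂((Measure.pi fun _ : Fin m × Fin K => unif a b) - ε • gam m K a b) := by
        calc (1 - (1 - ε) ^ (n' / K)) * L * (1 - ε)
            = ∫⁻ _g, (1 - (1 - ε) ^ (n' / K)) * L
                ∂((Measure.pi fun _ : Fin m × Fin K => unif a b) - ε • gam m K a b) := by
              rw [lintegral_const, hremuniv]
          _ ≤ _ := lintegral_mono hIH
      have harith : (1 - (1 - ε) ^ ((K + n') / K)) * L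
          ≤ (1 - (1 - ε) ^ (n' / K)) * L * (1 - ε) + ε * L := by
        rw [hdiv]
        set x := 1 - ε with hx
        set q := n' / K with hq
        have hx1 : x ≤ 1 := tsub_le_self
        have hxq : x ^ q ≤ 1 := pow_le_one' hx1 q
        have hxq1 : x ^ (q+1) ≤ x := by
          rw [pow_succ]
          calc x ^ q * x ≤ 1 * x := mul_le_mul_left hxq x
            _ = x := one_mul x
        have hxne : x ^ (q+1) ≠ ∞ := (lt_of_le_of_lt (le_trans hxq1 hx1) ENNReal.one_lt_top).ne
        have hkey : x * (1 - x ^ q) = x - x ^ (q+1) := by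
          apply ENNReal.eq_sub_of_add_eq hxne
          rw [pow_succ, mul_comm (x ^ q) x, ← mul_add, tsub_add_cancel_of_le hxq, mul_one]
        have hεx : ε + x = 1 := add_tsub_cancel_of_le (eps_le_one hab)
        apply le_of_eq
        calc (1 - x ^ (q+1)) * L = (ε + x - x ^ (q+1)) * L := by rw [hεx]
          _ = (ε + (x - x ^ (q+1))) * L := by
              have hassoc : ε + (x - x ^ (q+1)) = ε + x - x ^ (q+1) :=
                ENNReal.eq_sub_of_add_eq hxne (by rw [add_assoc, tsub_add_cancel_of_le hxq1])
              rw [hassoc]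
          _ = (ε + x * (1 - x ^ q)) * L := by rw [hkey]
          _ = (1 - x ^ q) * L * x + ε * L := by ring
      calc (1 - (1 - ε) ^ ((K + n') / K)) * L
          ≤ (1 - (1 - ε) ^ (n' / K)) * L * (1 - ε) + ε * L := harith
        _ ≤ ∫⁻ g, f g ∂((Measure.pi fun _ : Fin m × Fin K => unif a b) - ε • gam m K a b)
            + ε * ∫⁻ g, f g ∂(gam m K a b) := add_le_add hrem (by rw [hgamterm])
        _ = ∫⁻ g, f g ∂(Measure.pi fun _ : Fin m × Fin K => unif a b) := hdec.symm

end BenfordCor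

open BenfordCor

/-- The significand of `x` in base `B`: the unique element of `[1, B)` of the form
`x / B ^ k` for an integer `k` (for `x > 0`, `B > 1`). -/
noncomputable def significand (B x : ℝ) : ℝ := B ^ (Int.fract (Real.logb B x))

/-- A sequence of (positive) random variables converges to strong Benford behavior in
base `B` if for all `D ∈ [1, B]` the probability that the significand is at most `D`
tends to `log_B D`. -/
def StrongBenford {Ω : Type*} [MeasurableSpace Ω] (μ : Measure Ω) (B : ℝ)
    (X : ℕ → Ω → ℝ) : Prop :=
  ∀ D ∈ Set.Icc 1 B,
    Tendsto (fun n => (μ {ω | significand B (X n ω) ≤ D}).toReal)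
      atTop (nhds (Real.logb B D))

/-- **Corollary 1.11**: for a linear-fragmentation process whose proportion cuts are
identically log-uniform base `B` (i.e. `log_B P_i^{(t)}` uniform on `(a,b)`, `a < b ≤ 0`),
the frame perimeters `V_1^{(n)} = 2^{m-1} Σ_{i=1}^m S_i^{(n)}` converge to strong
Benford behavior base `B`. -/
theorem benford_perimeter_loguniform
    {Ω : Type*} [MeasurableSpace Ω] (μ : Measure Ω) [IsProbabilityMeasure μ]
    (B : ℝ) (hB : 1 < B)
    (m : ℕ) (hm : 1 ≤ m)
    (a b : ℝ) (hab : a < b) (hb : b ≤ 0)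
    (P : Fin m → ℕ → Ω → ℝ)
    (hmeas : ∀ i t, Measurable (P i t))
    (hval : ∀ i t ω, P i t ω ∈ Set.Ioo (0 : ℝ) 1)
    (hindep : iIndepFun (fun p : Fin m × ℕ => P p.1 p.2) μ)
    (hunif : ∀ i t, μ.map (fun ω => Real.logb B (P i t ω)) =
      (ENNReal.ofReal (b - a))⁻¹ • volume.restrict (Set.Ioo a b))
    (P0 : Fin m → ℝ) (hP0 : ∀ i, 0 < P0 i)
    (S : ℕ → Fin m → Ω → ℝ)
    (hS : ∀ n i ω, S n i ω = P0 i * ∏ t ∈ Finset.range n, P i t ω) :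
    StrongBenford μ B (fun n ω => (2 : ℝ) ^ (m - 1) * ∑ i : Fin m, S n i ω) := by
  classical
  have hB0 : (0:ℝ) < B := lt_trans one_pos hB
  have hBne : B ≠ 1 := ne_of_gt hB
  have hδpos : (0:ℝ) < b - a := by linarith
  -- choose the block length K
  set K := max 1 ⌈2/(b-a)⌉₊ with hKdef
  have hK1 : 1 ≤ K := le_max_left _ _
  have hKpos : (0:ℝ) < (K:ℝ) := by
    have : (1:ℝ) ≤ (K:ℝ) := by exact_mod_cast hK1
    linarith
  have hKd : 1/(K:ℝ) ≤ (b-a)/2 := by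
    have h2 : 2/(b-a) ≤ (K:ℝ) := by
      calc 2/(b-a) ≤ (⌈2/(b-a)⌉₊ : ℝ) := Nat.le_ceil _
        _ ≤ (K:ℝ) := by exact_mod_cast le_max_right 1 ⌈2/(b-a)⌉₊
    rw [div_le_div_iff₀ hKpos (by norm_num : (0:ℝ) < 2)]
    have h3 : (2/(b-a)) * (b-a) ≤ (K:ℝ) * (b-a) :=
      mul_le_mul_of_nonneg_right h2 (le_of_lt hδpos)
    rw [div_mul_cancel₀ _ (ne_of_gt hδpos)] at h3
    linarith
  haveI hup : IsProbabilityMeasure (unif a b) := unif_prob hab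
  haveI : SigmaFinite (unif a b) := by infer_instance
  -- measurability of the log variables
  have hXmeas : ∀ p : Fin m × ℕ, Measurable fun ω => Real.logb B (P p.1 p.2 ω) := by
    intro p
    have : (fun ω => Real.logb B (P p.1 p.2 ω))
        = fun ω => Real.log (P p.1 p.2 ω) / Real.log B := rfl
    rw [this]
    exact (Real.measurable_log.comp (hmeas p.1 p.2)).div_const _
  have hindepX : iIndepFun
      (fun (p : Fin m × ℕ) (ω : Ω) => Real.logb B (P p.1 p.2 ω)) μ := by
    have hcomp := hindep.comp (fun _ : Fin m × ℕ => fun x : ℝ => Real.logb B x)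
      (fun _ => by
        have : (fun x : ℝ => Real.logb B x) = fun x => Real.log x / Real.log B := rfl
        rw [this]
        exact Real.measurable_log.div_const _)
    exact hcomp
  -- joint law: product of uniforms
  have hΦnmeas : ∀ n : ℕ,
      Measurable (fun ω (q : Fin m × Fin n) => Real.logb B (P q.1 q.2 ω)) := fun n =>
    measurable_pi_lambda _ fun q => hXmeas (q.1, (q.2 : ℕ))
  have hJL : ∀ n : ℕ, μ.map (fun ω (q : Fin m × Fin n) => Real.logb B (P q.1 q.2 ω))
      = Measure.pi fun _ : Fin m × Fin n => unif a b := by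
    intro n
    refine (Measure.pi_eq fun s hs => ?_).symm
    rw [Measure.map_apply (hΦnmeas n) (MeasurableSet.univ_pi hs)]
    set ι : Fin m × Fin n → Fin m × ℕ := fun q => (q.1, (q.2 : ℕ)) with hιdef
    have hιinj : Function.Injective ι := by
      intro q q' h
      simp only [hιdef, Prod.mk.injEq] at h
      exact Prod.ext h.1 (Fin.ext h.2)
    set sets : Fin m × ℕ → Set ℝ := fun p =>
      if h : p.2 < n then s (p.1, ⟨p.2, h⟩) else univ with hsetsdef
    have hsets_eq : ∀ q : Fin m × Fin n, sets (ι q) = s q := by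
      intro q
      simp only [hsetsdef, hιdef]
      rw [dif_pos q.2.isLt]
    have hsets_meas : ∀ p ∈ (Finset.univ : Finset (Fin m × Fin n)).image ι,
        MeasurableSet (sets p) := by
      intro p _
      simp only [hsetsdef]
      split
      · exact hs _
      · exact MeasurableSet.univ
    have hbig := hindepX.measure_inter_preimage_eq_mul
      (S := (Finset.univ : Finset (Fin m × Fin n)).image ι) (sets := sets) hsets_meas
    have hpre : (fun ω (q : Fin m × Fin n) => Real.logb B (P q.1 q.2 ω)) ⁻¹' (univ.pi s)
        = ⋂ p ∈ (Finset.univ : Finset (Fin m × Fin n)).image ι,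
            (fun ω => Real.logb B (P p.1 p.2 ω)) ⁻¹' (sets p) := by
      ext ω
      constructor
      · intro hall
        have hall' : ∀ q : Fin m × Fin n, Real.logb B (P q.1 (q.2:ℕ) ω) ∈ s q := by
          intro q; exact hall q (mem_univ q)
        refine mem_iInter₂.2 fun p hp => ?_
        rcases Finset.mem_image.1 hp with ⟨q, -, rfl⟩
        show ω ∈ (fun ω => Real.logb B (P (ι q).1 (ι q).2 ω)) ⁻¹' (sets (ι q))
        rw [mem_preimage, hsets_eq q]
        exact hall' q
      · intro hall
        intro q _
        have h := mem_iInter₂.1 hall (ι q) (Finset.mem_image.2 ⟨q, Finset.mem_univ q, rfl⟩)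
        rw [mem_preimage, hsets_eq q] at h
        exact h
    rw [hpre, hbig, Finset.prod_image (fun q _ q' _ h => hιinj h)]
    apply Finset.prod_congr rfl
    intro q _
    rw [hsets_eq q, ← Measure.map_apply (hXmeas (ι q)) (hs q)]
    rw [show (fun ω => Real.logb B (P (ι q).1 (ι q).2 ω))
      = fun ω => Real.logb B (P q.1 (q.2 : ℕ) ω) from rfl]
    rw [hunif q.1 (q.2 : ℕ)]
    rfl
  -- now the limit statement
  intro D hD
  set u := Real.logb B D with hu
  have hD1 : (1:ℝ) ≤ D := hD.1
  have hDB : D ≤ B := hD.2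
  have hD0 : (0:ℝ) < D := lt_of_lt_of_le one_pos hD1
  have hu0 : 0 ≤ u := Real.logb_nonneg hB hD1
  have hlogB : 0 < Real.log B := Real.log_pos hB
  have hu1 : u ≤ 1 := by
    rw [hu, Real.logb, div_le_one hlogB]
    exact Real.log_le_log hD0 hDB
  -- identify the events
  have hiff : ∀ V : ℝ, (significand B V ≤ D ↔ Int.fract (Real.logb B V) ≤ u) := by
    intro V
    rw [significand, show D = B ^ u from (Real.rpow_logb hB0 hBne hD0).symm,
      Real.rpow_le_rpow_left_iff hB]
  have hlogV : ∀ (n : ℕ) (ω : Ω), Real.logb B ((2:ℝ)^(m-1) * ∑ i, S n i ω)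
      = hfun B m P0 (fun i =>
          colsum m n (fun q : Fin m × Fin n => Real.logb B (P q.1 q.2 ω)) i) := by
    intro n ω
    rw [hfun]
    congr 2
    apply Finset.sum_congr rfl
    intro i _
    rw [hS n i ω]
    congr 1
    have hcs : colsum m n (fun q : Fin m × Fin n => Real.logb B (P q.1 q.2 ω)) i
        = ∑ t ∈ Finset.range n, Real.logb B (P i t ω) := by
      rw [colsum]
      exact Fin.sum_univ_eq_sum_range (fun t => Real.logb B (P i t ω)) n
    rw [hcs, Real.rpow_sum_of_pos hB0]
    apply Finset.prod_congr rfl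
    intro t _
    exact (Real.rpow_logb hB0 hBne (hval i t ω).1).symm
  have hev : ∀ n : ℕ, {ω | significand B ((2:ℝ)^(m-1) * ∑ i, S n i ω) ≤ D}
      = (fun ω (q : Fin m × Fin n) => Real.logb B (P q.1 q.2 ω)) ⁻¹'
          (EvSet B m P0 n 0 (Icc 0 u)) := by
    intro n
    ext ω
    simp only [mem_setOf_eq, mem_preimage, EvSet, mem_setOf_eq, Pi.zero_apply, zero_add,
      mem_Icc]
    rw [hiff, hlogV n ω]
    exact ⟨fun h => ⟨Int.fract_nonneg _, h⟩, fun h => h.2⟩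
  have hμev : ∀ n : ℕ, μ {ω | significand B ((2:ℝ)^(m-1) * ∑ i, S n i ω) ≤ D}
      = (Measure.pi fun _ : Fin m × Fin n => unif a b) (EvSet B m P0 n 0 (Icc 0 u)) := by
    intro n
    rw [hev n, ← hJL n,
      Measure.map_apply (hΦnmeas n) (EvSet_meas hB n 0 measurableSet_Icc)]
  -- volumes
  have hvol1 : volume (Icc (0:ℝ) u ∩ Ico 0 1) = ENNReal.ofReal u := by
    apply le_antisymm
    · calc volume (Icc (0:ℝ) u ∩ Ico 0 1) ≤ volume (Icc (0:ℝ) u) :=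
          measure_mono inter_subset_left
        _ = ENNReal.ofReal u := by rw [Real.volume_Icc, sub_zero]
    · calc ENNReal.ofReal u = volume (Ico (0:ℝ) u) := by rw [Real.volume_Ico, sub_zero]
        _ ≤ volume (Icc (0:ℝ) u ∩ Ico 0 1) := by
            apply measure_mono
            rintro x ⟨hx0, hxu⟩
            exact ⟨⟨hx0, le_of_lt hxu⟩, ⟨hx0, lt_of_lt_of_le hxu hu1⟩⟩
  have hvol2 : volume (Ioi u ∩ Ico (0:ℝ) 1) = ENNReal.ofReal (1 - u) := by
    have : Ioi u ∩ Ico (0:ℝ) 1 = Ioo u 1 := by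
      ext x
      simp only [mem_inter_iff, mem_Ioi, mem_Ico, mem_Ioo]
      exact ⟨fun h => ⟨h.1, h.2.2⟩, fun h => ⟨h.1, ⟨le_trans hu0 (le_of_lt h.1), h.2⟩⟩⟩
    rw [this, Real.volume_Ioo]
  -- complement identity
  have hcompl : ∀ n : ℕ, EvSet B m P0 n 0 (Ioi u) = (EvSet B m P0 n 0 (Icc 0 u))ᶜ := by
    intro n
    ext x
    simp only [EvSet, mem_setOf_eq, mem_compl_iff, mem_Ioi, mem_Icc, not_and, not_le]
    constructor
    · intro h h0
      exact h
    · intro h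
      exact h (Int.fract_nonneg _)
  -- real-valued bounds
  set r : ℝ := ((1:ℝ≥0∞) - eps m K a b).toReal with hrdef
  have hr0 : 0 ≤ r := ENNReal.toReal_nonneg
  have hεle : eps m K a b ≤ 1 := eps_le_one hab
  have hεpos : 0 < eps m K a b := eps_pos hm hK1 hab hKd
  have hr1 : r < 1 := by
    have hlt : (1:ℝ≥0∞) - eps m K a b < 1 :=
      ENNReal.sub_lt_self ENNReal.one_ne_top one_ne_zero (ne_of_gt hεpos)
    have := ENNReal.toReal_strict_mono ENNReal.one_ne_top hlt
    rwa [ENNReal.toReal_one] at this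
  have hxle1 : (1:ℝ≥0∞) - eps m K a b ≤ 1 := tsub_le_self
  have hbound : ∀ n : ℕ,
      |(μ {ω | significand B ((2:ℝ)^(m-1) * ∑ i, S n i ω) ≤ D}).toReal - u|
        ≤ r ^ (n / K) := by
    intro n
    haveI : IsProbabilityMeasure (Measure.pi fun _ : Fin m × Fin n => unif a b) := by
      infer_instance
    set Pn := (Measure.pi fun _ : Fin m × Fin n => unif a b) (EvSet B m P0 n 0 (Icc 0 u))
      with hPndef
    set w : ℝ≥0∞ := (1 - eps m K a b) ^ (n / K) with hwdef
    have hwle1 : w ≤ 1 := pow_le_one' hxle1 _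
    have hwne : w ≠ ∞ := (lt_of_le_of_lt hwle1 ENNReal.one_lt_top).ne
    have hwtoReal : w.toReal = r ^ (n / K) := ENNReal.toReal_pow _ _
    have hPnle : Pn ≤ 1 := prob_le_one
    have hPnne : Pn ≠ ∞ := (lt_of_le_of_lt hPnle ENNReal.one_lt_top).ne
    have hcoef : ((1:ℝ≥0∞) - w).toReal = 1 - r ^ (n / K) := by
      rw [ENNReal.toReal_sub_of_le hwle1 ENNReal.one_ne_top, ENNReal.toReal_one, hwtoReal]
    -- lower bound
    have hlow : (1 - r ^ (n / K)) * u ≤ Pn.toReal := by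
      have h1 := engine hB hm hK1 hab hKd hP0 (Icc 0 u) measurableSet_Icc n 0
      rw [hvol1] at h1
      have h2 := ENNReal.toReal_mono hPnne h1
      rwa [ENNReal.toReal_mul, hcoef, ENNReal.toReal_ofReal hu0] at h2
    -- upper bound
    have hupp : Pn.toReal ≤ u + r ^ (n / K) * (1 - u) := by
      have h1 := engine hB hm hK1 hab hKd hP0 (Ioi u) measurableSet_Ioi n 0
      rw [hvol2, hcompl n] at h1
      have hQn : (Measure.pi fun _ : Fin m × Fin n => unif a b)
          (EvSet B m P0 n 0 (Icc 0 u))ᶜ = 1 - Pn := by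
        rw [measure_compl (EvSet_meas hB n 0 measurableSet_Icc) hPnne, measure_univ]
      rw [hQn] at h1
      have h2 := ENNReal.toReal_mono (by
        exact (lt_of_le_of_lt (tsub_le_self) (lt_of_le_of_lt (le_refl 1) ENNReal.one_lt_top)).ne) h1
      rw [ENNReal.toReal_mul, hcoef, ENNReal.toReal_ofReal (by linarith),
        ENNReal.toReal_sub_of_le hPnle ENNReal.one_ne_top, ENNReal.toReal_one] at h2
      nlinarith [h2]
    have hrn : (0:ℝ) ≤ r ^ (n / K) := pow_nonneg hr0 _
    rw [hμev n]
    apply abs_le.2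
    constructor
    · nlinarith [hlow]
    · nlinarith [hupp]
  -- conclusion
  have htends : Tendsto (fun n : ℕ => r ^ (n / K)) atTop (nhds 0) := by
    have h1 : Tendsto (fun j : ℕ => r ^ j) atTop (nhds 0) :=
      tendsto_pow_atTop_nhds_zero_of_lt_one hr0 hr1
    have h2 : Tendsto (fun n : ℕ => n / K) atTop atTop :=
      le_of_eq (map_div_atTop_eq_nat K (by omega))
    exact h1.comp h2
  have hzero : Tendsto (fun n : ℕ =>
      (μ {ω | significand B ((2:ℝ)^(m-1) * ∑ i, S n i ω) ≤ D}).toReal - u) atTop (nhds 0) := by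
    apply squeeze_zero_norm ?_ htends
    intro n
    rw [Real.norm_eq_abs]
    exact hbound n
  have hfinal := hzero.add_const u
  rw [zero_add] at hfinal
  convert hfinal using 2 with n
  · ring
end

section
/- Let \widehat{f_n}(k) = (sinc(k√3/√n))^n for n ≥ 1 and real k, where sinc(u) = sin(u)/u for u ≠ 0 and sinc(0) = 1, and fix ε ∈ (0, 1/4). Then for all sufficiently large n, ∫_{n^ε ≤ |k| ≤ √n} |\widehat{f_n}(k)| dk ≤ 2·√n · e^{−n^{2ε}/2.1}. -/
open MeasureTheory Filter

/-- The (unnormalized) sinc function: `sinc u = sin u / u` for `u ≠ 0`, `sinc 0 = 1`. -/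
noncomputable def sinc (u : ℝ) : ℝ := if u = 0 then 1 else Real.sin u / u

private lemma nonneg_of_deriv (f f' : ℝ → ℝ) (hf : ∀ x, HasDerivAt f (f' x) x)
    (h0 : f 0 = 0) (hd : ∀ x, 0 ≤ x → 0 ≤ f' x) : ∀ x, 0 ≤ x → 0 ≤ f x := by
  intro x hx
  have hmono : MonotoneOn f (Set.Ici (0 : ℝ)) := by
    apply monotoneOn_of_deriv_nonneg (convex_Ici 0)
    · exact (Differentiable.continuous fun y => (hf y).differentiableAt).continuousOn
    · intro y _; exact (hf y).differentiableAt.differentiableWithinAt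
    · intro y hy
      rw [interior_Ici] at hy
      rw [(hf y).deriv]
      exact hd y hy.le
  have := hmono (Set.self_mem_Ici) hx hx
  rwa [h0] at this

private lemma sin_ge_cubic : ∀ x : ℝ, 0 ≤ x → x - x ^ 3 / 6 ≤ Real.sin x := by
  have h := nonneg_of_deriv (fun x => Real.sin x - (x - x ^ 3 / 6))
      (fun x => Real.cos x - (1 - x ^ 2 / 2)) ?_ (by simp) ?_
  · intro x hx; have := h x hx; linarith
  · intro x
    have h1 : HasDerivAt (fun x : ℝ => x - x ^ 3 / 6) (1 - 3 * x ^ 2 / 6) x := by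
      have := ((hasDerivAt_id x).sub ((hasDerivAt_pow 3 x).div_const 6))
      exact this.congr_deriv (by norm_num)
    have := (Real.hasDerivAt_sin x).sub h1
    exact this.congr_deriv (by ring)
  · intro x _
    have := Real.one_sub_sq_div_two_le_cos (x := x)
    linarith

private lemma cos_le_quartic : ∀ x : ℝ, 0 ≤ x →
    Real.cos x ≤ 1 - x ^ 2 / 2 + x ^ 4 / 24 := by
  have h := nonneg_of_deriv (fun x => (1 - x ^ 2 / 2 + x ^ 4 / 24) - Real.cos x)
      (fun x => (Real.sin x - (x - x ^ 3 / 6))) ?_ (by simp) ?_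
  · intro x hx; have := h x hx; linarith
  · intro x
    have h1 : HasDerivAt (fun x : ℝ => 1 - x ^ 2 / 2 + x ^ 4 / 24)
        (-(2 * x / 2) + 4 * x ^ 3 / 24) x := by
      have := (((hasDerivAt_const x (1 : ℝ)).sub ((hasDerivAt_pow 2 x).div_const 2)).add
        ((hasDerivAt_pow 4 x).div_const 24))
      exact this.congr_deriv (by norm_num)
    have := h1.sub (Real.hasDerivAt_cos x)
    exact this.congr_deriv (by ring)
  · intro x hx
    have := sin_ge_cubic x hx
    linarith

private lemma sin_le_quintic : ∀ x : ℝ, 0 ≤ x →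
    Real.sin x ≤ x - x ^ 3 / 6 + x ^ 5 / 120 := by
  have h := nonneg_of_deriv (fun x => (x - x ^ 3 / 6 + x ^ 5 / 120) - Real.sin x)
      (fun x => (1 - x ^ 2 / 2 + x ^ 4 / 24) - Real.cos x) ?_ (by simp) ?_
  · intro x hx; have := h x hx; linarith
  · intro x
    have h1 : HasDerivAt (fun x : ℝ => x - x ^ 3 / 6 + x ^ 5 / 120)
        (1 - 3 * x ^ 2 / 6 + 5 * x ^ 4 / 120) x := by
      have := (((hasDerivAt_id x).sub ((hasDerivAt_pow 3 x).div_const 6)).add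
        ((hasDerivAt_pow 5 x).div_const 120))
      exact this.congr_deriv (by norm_num)
    have := h1.sub (Real.hasDerivAt_sin x)
    exact this.congr_deriv (by ring)
  · intro x hx
    have h1 : 0 ≤ x := hx
    rcases eq_or_lt_of_le hx with rfl | hx'
    · simp
    · have := cos_le_quartic x hx
      linarith

private lemma sinc_even (x : ℝ) : sinc (-x) = sinc x := by
  unfold sinc
  rcases eq_or_ne x 0 with rfl | hx
  · simp
  · rw [if_neg (by simpa using hx), if_neg hx, Real.sin_neg, neg_div_neg_eq]

set_option maxHeartbeats 800000 in
/-- Intermediate-frequency bound from the proof of Lemma 3.1: with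
`f̂_n(k) = sinc(k√3/√n)ⁿ` and `ε ∈ (0, 1/4)` fixed, for all sufficiently large `n`,
`∫_{n^ε ≤ |k| ≤ √n} |f̂_n(k)| dk ≤ 2√n · e^{−n^{2ε}/2.1}`. -/
theorem intermediate_frequency_bound (ε : ℝ) (hε : ε ∈ Set.Ioo (0 : ℝ) (1 / 4)) :
    ∃ N : ℕ, ∀ n : ℕ, N ≤ n →
      (∫ k in {k : ℝ | (n : ℝ) ^ ε ≤ |k| ∧ |k| ≤ Real.sqrt n},
          |sinc (k * Real.sqrt 3 / Real.sqrt n) ^ n|) ≤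
        2 * Real.sqrt n * Real.exp (-(n : ℝ) ^ (2 * ε) / 2.1) := by
  obtain ⟨hε0, hε4⟩ := hε
  -- eventually `n ^ (2ε) ≤ (315/1000 : ℝ) n`
  have hneg : (0 : ℝ) < 1 - 2 * ε := by linarith
  have htend : Tendsto (fun n : ℕ => (n : ℝ) ^ (2 * ε - 1)) atTop (nhds 0) := by
    have h1 : Tendsto (fun x : ℝ => x ^ (-(1 - 2 * ε))) atTop (nhds 0) :=
      tendsto_rpow_neg_atTop hneg
    have h2 : Tendsto (fun n : ℕ => (n : ℝ)) atTop atTop := tendsto_natCast_atTop_atTop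
    have := h1.comp h2
    simpa [Function.comp_def, show -(1 - 2 * ε) = 2 * ε - 1 by ring] using this
  have hev : ∀ᶠ n : ℕ in atTop, (n : ℝ) ^ (2 * ε - 1) ≤ (315/1000 : ℝ) := by
    apply htend.eventually_le_const
    norm_num
  obtain ⟨N, hN⟩ := eventually_atTop.mp (hev.and (eventually_ge_atTop 1))
  refine ⟨N, fun n hn => ?_⟩
  obtain ⟨hsmall, hn1⟩ := hN n hn
  have hn0 : (0 : ℝ) < n := by exact_mod_cast hn1
  have hnpow : (n : ℝ) ^ (2 * ε) ≤ (315/1000 : ℝ) * n := by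
    have : (n : ℝ) ^ (2 * ε) = (n : ℝ) ^ (2 * ε - 1) * n := by
      rw [← Real.rpow_add_one (ne_of_gt hn0)]
      ring_nf
    rw [this]
    exact mul_le_mul_of_nonneg_right hsmall hn0.le
  set S : Set ℝ := {k : ℝ | (n : ℝ) ^ ε ≤ |k| ∧ |k| ≤ Real.sqrt n} with hS
  set C : ℝ := Real.exp (-(n : ℝ) ^ (2 * ε) / 2.1) with hC
  have hsqn : (0 : ℝ) < Real.sqrt n := Real.sqrt_pos.mpr hn0
  have hs3 : (0 : ℝ) < Real.sqrt 3 := Real.sqrt_pos.mpr (by norm_num)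
  have hs3sq : Real.sqrt 3 ^ 2 = 3 := Real.sq_sqrt (by norm_num)
  have hsnsq : Real.sqrt n ^ 2 = n := Real.sq_sqrt hn0.le
  -- pointwise bound
  have hpt : ∀ k ∈ S, |sinc (k * Real.sqrt 3 / Real.sqrt n) ^ n| ≤ C := by
    rintro k ⟨hk1, hk2⟩
    obtain ⟨u, hu⟩ : ∃ u : ℝ, u = |k| * Real.sqrt 3 / Real.sqrt n := ⟨_, rfl⟩
    have hk0 : 0 < |k| := lt_of_lt_of_le (Real.rpow_pos_of_pos hn0 ε) hk1
    have hu0 : 0 < u := by rw [hu]; positivity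
    have husq : u ^ 2 = 3 * k ^ 2 / n := by
      rw [hu, div_pow, mul_pow, hs3sq, hsnsq, sq_abs]
      ring
    have hu3 : u ^ 2 ≤ 3 := by
      rw [husq]
      rw [div_le_iff₀ hn0]
      nlinarith [sq_abs k, Real.sqrt_nonneg (n : ℝ)]
    -- sin u ≥ 0 since u ≤ √3 ≤ π
    have hupi : u ≤ Real.pi := by
      nlinarith [Real.pi_gt_three]
    have hsin0 : 0 ≤ Real.sin u := Real.sin_nonneg_of_nonneg_of_le_pi hu0.le hupi
    have hsincu : sinc u = Real.sin u / u := by rw [sinc, if_neg hu0.ne']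
    have hsinc0 : 0 ≤ sinc u := by rw [hsincu]; positivity
    -- |sinc x ^ n| = sinc u ^ n
    have hsinceq : sinc (k * Real.sqrt 3 / Real.sqrt n) = sinc u := by
      rcases abs_cases k with ⟨h, _⟩ | ⟨h, _⟩
      · rw [hu, h]
      · rw [hu, h, show -k * Real.sqrt 3 / Real.sqrt n =
          -(k * Real.sqrt 3 / Real.sqrt n) by ring, sinc_even]
    have habs : |sinc (k * Real.sqrt 3 / Real.sqrt n) ^ n| = sinc u ^ n := by
      rw [abs_pow, hsinceq, abs_of_nonneg hsinc0]
    rw [habs]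
    -- key polynomial bound
    have hquint : sinc u ≤ 1 - u ^ 2 / 6 + u ^ 4 / 120 := by
      rw [hsincu, div_le_iff₀ hu0]
      have := sin_le_quintic u hu0.le
      nlinarith
    have hksq : (n : ℝ) ^ (2 * ε) ≤ k ^ 2 := by
      have h2 : ((n : ℝ) ^ ε) ^ 2 ≤ |k| ^ 2 := by
        exact pow_le_pow_left₀ (Real.rpow_nonneg hn0.le ε) hk1 2
      rw [sq_abs] at h2
      calc (n : ℝ) ^ (2 * ε) = ((n : ℝ) ^ ε) ^ (2 : ℕ) := by
            rw [← Real.rpow_natCast ((n : ℝ) ^ ε) 2, ← Real.rpow_mul hn0.le]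
            norm_num [mul_comm]
        _ ≤ k ^ 2 := h2
    rcases le_or_gt (u ^ 2) (20 / 21) with hcase | hcase
    · -- small u
      have hu4 : u ^ 4 ≤ 20 / 21 * u ^ 2 := by
        have h' : u ^ 4 = u ^ 2 * u ^ 2 := by ring
        rw [h']
        exact mul_le_mul_of_nonneg_right hcase (sq_nonneg u)
      have h1 : sinc u ≤ 1 - u ^ 2 / (63/10 : ℝ) := by linarith
      have h2 : (0 : ℝ) ≤ 1 - u ^ 2 / (63/10 : ℝ) := by
        have := sq_nonneg u
        linarith
      have h3 : 1 - u ^ 2 / (63/10 : ℝ) ≤ Real.exp (-(u ^ 2 / (63/10 : ℝ))) := by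
        have := Real.add_one_le_exp (-(u ^ 2 / (63/10 : ℝ)))
        linarith
      calc sinc u ^ n ≤ Real.exp (-(u ^ 2 / (63/10 : ℝ))) ^ n :=
            pow_le_pow_left₀ hsinc0 (h1.trans h3) n
        _ = Real.exp (n * (-(u ^ 2 / (63/10 : ℝ)))) := by rw [← Real.exp_nat_mul]
        _ ≤ C := by
            rw [hC]
            apply Real.exp_le_exp.mpr
            have hnu : (n : ℝ) * u ^ 2 = 3 * k ^ 2 := by
              rw [husq]; field_simp
            have heq : (n : ℝ) * (-(u ^ 2 / (63/10 : ℝ))) = -k ^ 2 / 2.1 := by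
              linear_combination (-1 / (63/10 : ℝ)) * hnu
            rw [heq, show (2.1 : ℝ) = 21/10 by norm_num]
            exact (div_le_div_iff_of_pos_right (by norm_num)).mpr (by linarith)
    · -- large u
      have h1 : sinc u ≤ (85/100 : ℝ) := by
        have hprod : 0 ≤ (u ^ 2 - 20 / 21) * (3 - u ^ 2) :=
          mul_nonneg (by linarith) (by linarith)
        have hexp : (u ^ 2 - 20 / 21) * (3 - u ^ 2) =
            -u ^ 4 + 83 / 21 * u ^ 2 - 60 / 21 := by ring
        rw [hexp] at hprod
        linarith
      have h2 : ((85/100 : ℝ) : ℝ) ≤ Real.exp (-(15/100 : ℝ)) := by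
        have := Real.add_one_le_exp (-(15/100 : ℝ) : ℝ)
        linarith
      calc sinc u ^ n ≤ Real.exp (-(15/100 : ℝ)) ^ n := pow_le_pow_left₀ hsinc0 (h1.trans h2) n
        _ = Real.exp (n * (-(15/100 : ℝ))) := by rw [← Real.exp_nat_mul]
        _ ≤ C := by
            rw [hC]
            apply Real.exp_le_exp.mpr
            rw [show (2.1 : ℝ) = 21/10 by norm_num]
            rw [le_div_iff₀ (by norm_num : (0:ℝ) < 21/10)]
            linarith
  -- measure of S
  have hS_sub : S ⊆ Set.Icc (-Real.sqrt n) (Real.sqrt n) := by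
    rintro k ⟨_, hk2⟩
    exact abs_le.mp hk2
  have hS_meas : MeasurableSet S := by
    have : S = {k : ℝ | (n : ℝ) ^ ε ≤ |k|} ∩ {k : ℝ | |k| ≤ Real.sqrt n} := rfl
    rw [this]
    exact (measurableSet_le measurable_const measurable_abs).inter
      (measurableSet_le measurable_abs measurable_const)
  have hvol : volume S ≤ ENNReal.ofReal (2 * Real.sqrt n) := by
    refine le_trans (measure_mono hS_sub) ?_
    rw [Real.volume_Icc]
    apply le_of_eq
    congr 1
    ring
  have hvolfin : volume S < ⊤ :=
    lt_of_le_of_lt hvol ENNReal.ofReal_lt_top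
  have hC0 : 0 ≤ C := Real.exp_nonneg _
  have key := norm_setIntegral_le_of_norm_le_const_ae' (μ := volume) (s := S)
    (f := fun k => |sinc (k * Real.sqrt 3 / Real.sqrt n) ^ n|) hvolfin
    (Eventually.of_forall (fun k hk => by
      rw [Real.norm_eq_abs, abs_abs]
      exact hpt k hk))
  calc (∫ k in S, |sinc (k * Real.sqrt 3 / Real.sqrt n) ^ n|)
      ≤ ‖∫ k in S, |sinc (k * Real.sqrt 3 / Real.sqrt n) ^ n|‖ := le_abs_self _
    _ ≤ C * (volume S).toReal := key
    _ ≤ C * (2 * Real.sqrt n) := by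
        apply mul_le_mul_of_nonneg_left _ hC0
        calc (volume S).toReal ≤ (ENNReal.ofReal (2 * Real.sqrt n)).toReal :=
              ENNReal.toReal_mono ENNReal.ofReal_ne_top hvol
          _ = 2 * Real.sqrt n := ENNReal.toReal_ofReal (by positivity)
    _ = 2 * Real.sqrt n * C := by ring
end

section
/- Let B > 1 and let P^{(1)}, P^{(2)}, … be i.i.d. random variables valued in (0,1) with a continuous probability density, and let φ(k) = E[e^{ik·log_B P^{(1)}}] denote the characteristic function of log_B P^{(1)}. Assume that lim_{n→∞} Σ_{ℓ ∈ ℤ, ℓ ≠ 0} |φ(2πℓ)|^n = 0. Then the products X^{(n)} = P^{(1)} · P^{(2)} ⋯ P^{(n)} converge to strong Benford behavior base B; that is, for every D ∈ [1,B], P( S_B(X^{(n)}) ≤ D ) → log_B D as n → ∞. -/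
open MeasureTheory ProbabilityTheory Filter

/-- Expectation of a product of two independent bounded measurable complex random
variables factors. -/
lemma indep_integral_mul_complex {Ω : Type*} [MeasurableSpace Ω] {μ : Measure Ω}
    [IsProbabilityMeasure μ] {X Y : Ω → ℂ}
    (h : IndepFun X Y μ) (hX : Measurable X) (hY : Measurable Y)
    (hbX : ∀ ω, ‖X ω‖ ≤ 1) (hbY : ∀ ω, ‖Y ω‖ ≤ 1) :
    ∫ ω, X ω * Y ω ∂μ = (∫ ω, X ω ∂μ) * ∫ ω, Y ω ∂μ := by
  have intR : ∀ {g : Ω → ℝ}, Measurable g → (∀ ω, |g ω| ≤ 1) → Integrable g μ := by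
    intro g hg hb
    exact (integrable_const (1 : ℝ)).mono' hg.aestronglyMeasurable (Filter.Eventually.of_forall hb)
  have intC : ∀ {g : Ω → ℂ}, Measurable g → (∀ ω, ‖g ω‖ ≤ 1) → Integrable g μ := by
    intro g hg hb
    exact (integrable_const (1 : ℝ)).mono' hg.aestronglyMeasurable (Filter.Eventually.of_forall hb)
  have habs_re : ∀ z : ℂ, ‖z‖ ≤ 1 → |z.re| ≤ 1 := fun z hz => le_trans (Complex.abs_re_le_norm z) hz
  have habs_im : ∀ z : ℂ, ‖z‖ ≤ 1 → |z.im| ≤ 1 := fun z hz => le_trans (Complex.abs_im_le_norm z) hz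
  have mXr : Measurable fun ω => (X ω).re := Complex.measurable_re.comp hX
  have mXi : Measurable fun ω => (X ω).im := Complex.measurable_im.comp hX
  have mYr : Measurable fun ω => (Y ω).re := Complex.measurable_re.comp hY
  have mYi : Measurable fun ω => (Y ω).im := Complex.measurable_im.comp hY
  have iXr : Integrable (fun ω => (X ω).re) μ := intR mXr fun ω => habs_re _ (hbX ω)
  have iXi : Integrable (fun ω => (X ω).im) μ := intR mXi fun ω => habs_im _ (hbX ω)
  have iYr : Integrable (fun ω => (Y ω).re) μ := intR mYr fun ω => habs_re _ (hbY ω)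
  have iYi : Integrable (fun ω => (Y ω).im) μ := intR mYi fun ω => habs_im _ (hbY ω)
  have ibnd : ∀ {g h : Ω → ℝ}, (∀ ω, |g ω| ≤ 1) → (∀ ω, |h ω| ≤ 1) → ∀ ω, |g ω * h ω| ≤ 1 := by
    intro g h hg hh ω
    rw [abs_mul]
    calc |g ω| * |h ω| ≤ 1 * 1 := by
          exact mul_le_mul (hg ω) (hh ω) (abs_nonneg _) zero_le_one
      _ = 1 := by ring
  have iX : Integrable X μ := intC hX hbX
  have iY : Integrable Y μ := intC hY hbY
  have iXY : Integrable (fun ω => X ω * Y ω) μ := by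
    refine intC (hX.mul hY) fun ω => ?_
    calc ‖X ω * Y ω‖ = ‖X ω‖ * ‖Y ω‖ := norm_mul _ _
      _ ≤ 1 * 1 := mul_le_mul (hbX ω) (hbY ω) (norm_nonneg _) zero_le_one
      _ = 1 := by ring
  have hrr : ∫ ω, (X ω).re * (Y ω).re ∂μ = (∫ ω, (X ω).re ∂μ) * ∫ ω, (Y ω).re ∂μ :=
    (h.comp Complex.measurable_re Complex.measurable_re).integral_fun_mul_eq_mul_integral
      mXr.aestronglyMeasurable mYr.aestronglyMeasurable
  have hii : ∫ ω, (X ω).im * (Y ω).im ∂μ = (∫ ω, (X ω).im ∂μ) * ∫ ω, (Y ω).im ∂μ :=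
    (h.comp Complex.measurable_im Complex.measurable_im).integral_fun_mul_eq_mul_integral
      mXi.aestronglyMeasurable mYi.aestronglyMeasurable
  have hri : ∫ ω, (X ω).re * (Y ω).im ∂μ = (∫ ω, (X ω).re ∂μ) * ∫ ω, (Y ω).im ∂μ :=
    (h.comp Complex.measurable_re Complex.measurable_im).integral_fun_mul_eq_mul_integral
      mXr.aestronglyMeasurable mYi.aestronglyMeasurable
  have hir : ∫ ω, (X ω).im * (Y ω).re ∂μ = (∫ ω, (X ω).im ∂μ) * ∫ ω, (Y ω).re ∂μ :=
    (h.comp Complex.measurable_im Complex.measurable_re).integral_fun_mul_eq_mul_integral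
      mXi.aestronglyMeasurable mYr.aestronglyMeasurable
  have reX : (∫ ω, X ω ∂μ).re = ∫ ω, (X ω).re ∂μ := (Complex.reCLM.integral_comp_comm iX).symm
  have imX : (∫ ω, X ω ∂μ).im = ∫ ω, (X ω).im ∂μ := (Complex.imCLM.integral_comp_comm iX).symm
  have reY : (∫ ω, Y ω ∂μ).re = ∫ ω, (Y ω).re ∂μ := (Complex.reCLM.integral_comp_comm iY).symm
  have imY : (∫ ω, Y ω ∂μ).im = ∫ ω, (Y ω).im ∂μ := (Complex.imCLM.integral_comp_comm iY).symm
  have reXY : (∫ ω, X ω * Y ω ∂μ).re = ∫ ω, (X ω * Y ω).re ∂μ :=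
    (Complex.reCLM.integral_comp_comm iXY).symm
  have imXY : (∫ ω, X ω * Y ω ∂μ).im = ∫ ω, (X ω * Y ω).im ∂μ :=
    (Complex.imCLM.integral_comp_comm iXY).symm
  have iRR : Integrable (fun ω => (X ω).re * (Y ω).re) μ :=
    intR (mXr.mul mYr) (ibnd (fun ω => habs_re _ (hbX ω)) (fun ω => habs_re _ (hbY ω)))
  have iII : Integrable (fun ω => (X ω).im * (Y ω).im) μ :=
    intR (mXi.mul mYi) (ibnd (fun ω => habs_im _ (hbX ω)) (fun ω => habs_im _ (hbY ω)))
  have iRI : Integrable (fun ω => (X ω).re * (Y ω).im) μ :=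
    intR (mXr.mul mYi) (ibnd (fun ω => habs_re _ (hbX ω)) (fun ω => habs_im _ (hbY ω)))
  have iIR : Integrable (fun ω => (X ω).im * (Y ω).re) μ :=
    intR (mXi.mul mYr) (ibnd (fun ω => habs_im _ (hbX ω)) (fun ω => habs_re _ (hbY ω)))
  apply Complex.ext
  · rw [reXY, Complex.mul_re, reX, reY, imX, imY, ← hrr, ← hii]
    simp_rw [Complex.mul_re]
    exact integral_sub iRR iII
  · rw [imXY, Complex.mul_im, reX, reY, imX, imY, ← hri, ← hir]
    simp_rw [Complex.mul_im]
    exact integral_add iRI iIR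


section
variable {Ω : Type*} [MeasurableSpace Ω] {μ : Measure Ω} [IsProbabilityMeasure μ]

lemma integral_prod_eq_prod (P : ℕ → Ω → ℝ) (hmeas : ∀ t, Measurable (P t))
    (hindep : iIndepFun P μ)
    (g : ℝ → ℂ) (hg : Measurable g) (hgb : ∀ x, ‖g x‖ ≤ 1) (n : ℕ) :
    ∫ ω, ∏ t ∈ Finset.range n, g (P t ω) ∂μ
      = ∏ t ∈ Finset.range n, ∫ ω, g (P t ω) ∂μ := by
  induction n with
  | zero => simp
  | succ n ih =>
    have hQindep : iIndepFun (fun t => g ∘ P t) μ :=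
      hindep.comp (fun _ => g) (fun _ => hg)
    have hprod : IndepFun (∏ j ∈ Finset.range n, (g ∘ P j)) (g ∘ P n) μ :=
      hQindep.indepFun_prod_range_succ (fun i => hg.comp (hmeas i)) n
    have hfun : (∏ j ∈ Finset.range n, (g ∘ P j)) = fun ω => ∏ j ∈ Finset.range n, g (P j ω) := by
      funext ω; simp
    rw [hfun] at hprod
    have hbnd : ∀ ω, ‖∏ j ∈ Finset.range n, g (P j ω)‖ ≤ 1 := by
      intro ω
      rw [norm_prod]
      exact Finset.prod_le_one (fun i _ => norm_nonneg _) (fun i _ => hgb _)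
    simp_rw [Finset.prod_range_succ]
    have mprod : Measurable (fun ω => ∏ j ∈ Finset.range n, g (P j ω)) :=
      Finset.measurable_prod _ (fun i _ => hg.comp (hmeas i))
    have key := indep_integral_mul_complex hprod mprod (hg.comp (hmeas n))
        hbnd (fun ω => hgb _)
    simp only [Function.comp_apply] at key
    rw [key, ih]

omit [IsProbabilityMeasure μ] in
lemma integral_comp_eq_of_map_eq {P₀ P₁ : Ω → ℝ} (h0 : Measurable P₀) (h1 : Measurable P₁)
    (hmap : μ.map P₀ = μ.map P₁) (g : ℝ → ℂ) (hg : Measurable g) :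
    ∫ ω, g (P₀ ω) ∂μ = ∫ ω, g (P₁ ω) ∂μ := by
  rw [← integral_map h0.aemeasurable hg.aestronglyMeasurable, hmap,
    integral_map h1.aemeasurable hg.aestronglyMeasurable]

end


lemma countable_level_logb {B : ℝ} (hB : 1 < B) (r : ℝ) :
    {x : ℝ | Real.logb B x = r}.Countable := by
  have hlogB : Real.log B ≠ 0 := ne_of_gt (Real.log_pos hB)
  have hsub : {x : ℝ | Real.logb B x = r} ⊆
      {0, Real.exp (r * Real.log B), -Real.exp (r * Real.log B)} := by
    intro x hx
    simp only [Set.mem_setOf_eq, Real.logb, div_eq_iff hlogB] at hx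
    rcases lt_trichotomy x 0 with h | h | h
    · right; right
      have hx' : Real.log (-x) = r * Real.log B := by rw [Real.log_neg_eq_log]; exact hx
      have : -x = Real.exp (r * Real.log B) := by
        rw [← hx', Real.exp_log (by linarith)]
      simp only [Set.mem_singleton_iff]
      linarith
    · left; exact h
    · right; left
      have : x = Real.exp (r * Real.log B) := by rw [← hx, Real.exp_log h]
      simp [this]
  exact Set.Countable.mono hsub
    ((Set.countable_singleton _).insert _ |>.insert _)

lemma unit_of_re_eq_one {w : ℂ} (habs : ‖w‖ = 1) (hre : w.re = 1) : w = 1 := by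
  have hsq : Complex.normSq w = 1 := by
    rw [Complex.normSq_eq_norm_sq, habs]; norm_num
  have him : w.im = 0 := by
    have : w.re ^ 2 + w.im ^ 2 = 1 := by
      rw [← hsq]; simp [Complex.normSq_apply]; ring
    nlinarith [sq_nonneg w.im]
  apply Complex.ext <;> simp [hre, him]

lemma norm_charfun_lt_one {Ω : Type*} [MeasurableSpace Ω] (μ : Measure Ω)
    [IsProbabilityMeasure μ] {B : ℝ} (hB : 1 < B) {P₀ : Ω → ℝ} (hm : Measurable P₀)
    {f : ℝ → ℝ} (hpdf : μ.map P₀ = volume.withDensity fun x => ENNReal.ofReal (f x))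
    {k : ℝ} (hk : k ≠ 0) :
    ‖∫ ω, Complex.exp (Complex.I * k * Real.logb B (P₀ ω)) ∂μ‖ < 1 := by
  set Z : Ω → ℂ := fun ω => Complex.exp (Complex.I * k * Real.logb B (P₀ ω)) with hZdef
  have hre0 : ∀ r : ℝ, (Complex.I * k * (r : ℂ)).re = 0 := by
    intro r; simp
  have hnorm1 : ∀ ω, ‖Z ω‖ = 1 := by
    intro ω
    rw [hZdef]
    simp only [Complex.norm_exp, hre0, Real.exp_zero]
  have mlog : Measurable fun ω => Real.logb B (P₀ ω) := by
    show Measurable fun ω => Real.log (P₀ ω) / Real.log B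
    exact (Real.measurable_log.comp hm).div_const _
  have mZ : Measurable Z :=
    Complex.measurable_exp.comp (measurable_const.mul (Complex.measurable_ofReal.comp mlog))
  have iZ : Integrable Z μ :=
    (integrable_const (1 : ℝ)).mono' mZ.aestronglyMeasurable
      (Filter.Eventually.of_forall fun ω => (hnorm1 ω).le)
  have hle : ‖∫ ω, Z ω ∂μ‖ ≤ 1 := by
    have := norm_integral_le_of_norm_le_const
      (C := 1) (μ := μ) (f := Z) (Filter.Eventually.of_forall fun ω => (hnorm1 ω).le)
    simpa using this
  rcases lt_or_eq_of_le hle with hlt | h1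
  · exact hlt
  exfalso
  set c : ℂ := ∫ ω, Z ω ∂μ with hcdef
  have habsc : ‖c‖ = 1 := h1
  set g : Ω → ℝ := fun ω => 1 - ((starRingEnd ℂ) c * Z ω).re with hgdef
  have habs_cz : ∀ ω, ‖(starRingEnd ℂ) c * Z ω‖ = 1 := by
    intro ω
    rw [norm_mul, Complex.norm_conj, habsc, hnorm1 ω, one_mul]
  have hg0 : ∀ ω, 0 ≤ g ω := by
    intro ω
    have := Complex.re_le_norm ((starRingEnd ℂ) c * Z ω)
    rw [habs_cz ω] at this
    simp only [hgdef]; linarith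
  have mW : Measurable fun ω => (starRingEnd ℂ) c * Z ω := measurable_const.mul mZ
  have iW : Integrable (fun ω => (starRingEnd ℂ) c * Z ω) μ := iZ.const_mul _
  have mg : Measurable g := measurable_const.sub (Complex.measurable_re.comp mW)
  have ig : Integrable g μ := (integrable_const (1 : ℝ)).sub (Complex.reCLM.integrable_comp iW)
  have hintg : ∫ ω, g ω ∂μ = 0 := by
    have iRe : Integrable (fun ω => ((starRingEnd ℂ) c * Z ω).re) μ := by
      exact Complex.reCLM.integrable_comp iW
    rw [hgdef]
    rw [integral_sub (integrable_const _) iRe]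
    have h2 : ∫ ω, ((starRingEnd ℂ) c * Z ω).re ∂μ = ((starRingEnd ℂ) c * ∫ ω, Z ω ∂μ).re := by
      rw [← integral_const_mul]
      exact (Complex.reCLM.integral_comp_comm iW)
    rw [h2, ← hcdef]
    have : ((starRingEnd ℂ) c * c).re = 1 := by
      rw [mul_comm, Complex.mul_conj]
      simp [Complex.normSq_eq_norm_sq, habsc]
    simp [this]
  have hgae : g =ᵐ[μ] 0 :=
    (integral_eq_zero_iff_of_nonneg (fun ω => hg0 ω) ig).mp hintg
  have hZc : ∀ᵐ ω ∂μ, Z ω = c := by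
    filter_upwards [hgae] with ω hω
    simp only [hgdef, Pi.zero_apply, sub_eq_zero] at hω
    have hw : (starRingEnd ℂ) c * Z ω = 1 :=
      unit_of_re_eq_one (habs_cz ω) hω.symm
    have := congrArg (fun z => c * z) hw
    simp only [mul_one] at this
    rw [← mul_assoc, Complex.mul_conj] at this
    rw [Complex.normSq_eq_norm_sq, habsc] at this
    simpa using this
  -- the set of x with exp(I k logb B x) = c is countable
  set A : Set ℝ := {x : ℝ | Complex.exp (Complex.I * k * Real.logb B x) = c} with hAdef
  have hAcount : A.Countable := by
    rcases Set.eq_empty_or_nonempty A with hA | ⟨x₀, hx₀⟩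
    · rw [hA]; exact Set.countable_empty
    have hsub : A ⊆ ⋃ m : ℤ, {x : ℝ | Real.logb B x = Real.logb B x₀ + 2 * Real.pi * m / k} := by
      intro x hx
      have hxc : Complex.exp (Complex.I * k * Real.logb B x)
          = Complex.exp (Complex.I * k * Real.logb B x₀) := by
        rw [hx, hx₀]
      rw [Complex.exp_eq_exp_iff_exists_int] at hxc
      obtain ⟨m, hm⟩ := hxc
      refine Set.mem_iUnion.mpr ⟨m, ?_⟩
      have him := congrArg Complex.im hm
      simp only [Complex.add_im, Complex.mul_im, Complex.mul_re, Complex.I_re, Complex.I_im,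
        Complex.ofReal_re, Complex.ofReal_im, Complex.intCast_re, Complex.intCast_im,
        Complex.re_ofNat, Complex.im_ofNat] at him
      have hk' : k * Real.logb B x = k * Real.logb B x₀ + m * (2 * Real.pi) := by
        field_simp at him ⊢
        linarith
      simp only [Set.mem_setOf_eq]
      have hdiv : 2 * Real.pi * (m:ℝ) / k = Real.logb B x - Real.logb B x₀ := by
        rw [div_eq_iff hk]; linarith [hk']
      linarith [hdiv]
    exact Set.Countable.mono hsub (Set.countable_iUnion fun m => countable_level_logb hB _)
  have hA0 : μ (P₀ ⁻¹' A) = 0 := by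
    have hvol : volume A = 0 := hAcount.measure_zero _
    have : μ.map P₀ A = 0 := by
      rw [hpdf]
      exact (withDensity_absolutelyContinuous volume _) hvol
    rwa [Measure.map_apply hm hAcount.measurableSet] at this
  have hA1 : μ {ω | ¬ P₀ ω ∈ A} = 0 := by
    rw [← ae_iff]
    filter_upwards [hZc] with ω hω
    exact hω
  have hcontra : (1 : ENNReal) ≤ 0 := by
    have huniv : (Set.univ : Set Ω) = P₀ ⁻¹' A ∪ {ω | ¬ P₀ ω ∈ A} := by
      ext ω; by_cases h : P₀ ω ∈ A <;> simp [h]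
    calc (1 : ENNReal) = μ Set.univ := (measure_univ).symm
      _ ≤ μ (P₀ ⁻¹' A) + μ {ω | ¬ P₀ ω ∈ A} := by rw [huniv]; exact measure_union_le _ _
      _ = 0 := by rw [hA0, hA1, add_zero]
  simp at hcontra


instance : IsProbabilityMeasure (volume : Measure (AddCircle (1:ℝ))) := by
  constructor
  rw [AddCircle.measure_univ]
  simp

lemma addCircle_singleton_null (z : AddCircle (1:ℝ)) :
    (volume : Measure (AddCircle (1:ℝ))) {z} = 0 := by
  rw [AddCircle.add_projection_respects_measure (1:ℝ) 0 (measurableSet_singleton z)]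
  refine Set.Subsingleton.measure_zero ?_ _
  intro x hx y hy
  have hinj := (AddCircle.equivIoc (1:ℝ) 0).symm.injective
  have hx' : ((x : ℝ) : AddCircle (1:ℝ)) = z := hx.1
  have hy' : ((y : ℝ) : AddCircle (1:ℝ)) = z := hy.1
  have : (AddCircle.equivIoc (1:ℝ) 0).symm ⟨x, hx.2⟩ =
      (AddCircle.equivIoc (1:ℝ) 0).symm ⟨y, hy.2⟩ := by
    show ((x : ℝ) : AddCircle (1:ℝ)) = ((y : ℝ) : AddCircle (1:ℝ))
    rw [hx', hy']
  have := hinj this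
  exact congrArg Subtype.val this

lemma addCircle_coe_int (m : ℤ) : (((m : ℝ)) : AddCircle (1:ℝ)) = 0 := by
  rw [AddCircle.coe_eq_zero_iff]
  exact ⟨m, by simp⟩

/-- Membership in the image of `[0, u]` on the circle is characterized by the fractional part. -/
lemma mem_arc_iff_fract {u : ℝ} (hu0 : 0 ≤ u) (hu1 : u < 1) (s : ℝ) :
    ((s : ℝ) : AddCircle (1:ℝ)) ∈ (((↑) : ℝ → AddCircle (1:ℝ)) '' Set.Icc 0 u)
      ↔ Int.fract s ≤ u := by
  constructor
  · rintro ⟨x, hx, hxs⟩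
    have hdiff : ((x - s : ℝ) : AddCircle (1:ℝ)) = 0 := by
      rw [AddCircle.coe_sub, hxs, sub_self]
    rw [AddCircle.coe_eq_zero_iff] at hdiff
    obtain ⟨m, hm⟩ := hdiff
    have hxm : x = s + m := by
      have : (m : ℝ) = x - s := by simpa using hm
      linarith
    have hfr : Int.fract x = Int.fract s := by rw [hxm, Int.fract_add_intCast]
    have hxfr : Int.fract x = x := Int.fract_eq_self.mpr ⟨hx.1, lt_of_le_of_lt hx.2 hu1⟩
    rw [← hfr, hxfr]
    exact hx.2
  · intro h
    refine ⟨Int.fract s, ⟨Int.fract_nonneg s, h⟩, ?_⟩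
    have : Int.fract s = s + (-⌊s⌋ : ℤ) := by
      rw [Int.fract]; push_cast; ring
    rw [this, AddCircle.coe_add, addCircle_coe_int, add_zero]

lemma arc_volume {u : ℝ} (hu0 : 0 ≤ u) (hu1 : u < 1) :
    (volume : Measure (AddCircle (1:ℝ))) ((((↑) : ℝ → AddCircle (1:ℝ))) '' Set.Icc 0 u)
      = ENNReal.ofReal u := by
  have hcl : IsClosed ((((↑) : ℝ → AddCircle (1:ℝ))) '' Set.Icc 0 u) :=
    (isCompact_Icc.image (AddCircle.continuous_mk' 1)).isClosed
  rw [AddCircle.add_projection_respects_measure (1:ℝ) (u - 1) hcl.measurableSet]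
  have hset : (QuotientAddGroup.mk ⁻¹' ((((↑) : ℝ → AddCircle (1:ℝ))) '' Set.Icc 0 u)
      ∩ Set.Ioc (u - 1) (u - 1 + 1)) = Set.Icc 0 u := by
    ext y
    simp only [Set.mem_inter_iff, Set.mem_preimage, Set.mem_Ioc, Set.mem_Icc]
    constructor
    · rintro ⟨⟨x, hx, hxy⟩, hy1, hy2⟩
      have hdiff : ((x - y : ℝ) : AddCircle (1:ℝ)) = 0 := by
        rw [AddCircle.coe_sub, hxy, sub_self]
      rw [AddCircle.coe_eq_zero_iff] at hdiff
      obtain ⟨m, hm⟩ := hdiff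
      have hm' : (m : ℝ) = x - y := by simpa using hm
      have hm0 : m = 0 := by
        have h1 : (m : ℝ) < 1 := by
          rw [hm']
          have : y > u - 1 := hy1
          have : x ≤ u := hx.2
          linarith
        have h2 : (-1 : ℝ) < m := by
          rw [hm']
          have : (0:ℝ) ≤ x := hx.1
          have : y ≤ u - 1 + 1 := hy2
          linarith
        have h1' : m < 1 := by exact_mod_cast h1
        have h2' : -1 < m := by exact_mod_cast h2
        omega
      have : x = y := by rw [hm0] at hm'; push_cast at hm'; linarith
      rw [← this]; exact hx
    · intro hy
      refine ⟨⟨y, hy, rfl⟩, ?_, ?_⟩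
      · linarith [hy.1]
      · linarith [hy.2]
  rw [hset, Real.volume_Icc]
  simp


lemma arc_frontier_null {u : ℝ} (hu0 : 0 ≤ u) (hu1 : u < 1) :
    (volume : Measure (AddCircle (1:ℝ)))
      (frontier ((((↑) : ℝ → AddCircle (1:ℝ))) '' Set.Icc 0 u)) = 0 := by
  set E := (((↑) : ℝ → AddCircle (1:ℝ))) '' Set.Icc 0 u with hE
  have hcl : IsClosed E := (isCompact_Icc.image (AddCircle.continuous_mk' 1)).isClosed
  have hopen : IsOpen ((((↑) : ℝ → AddCircle (1:ℝ))) '' Set.Ioo 0 u) :=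
    QuotientAddGroup.isOpenMap_coe _ isOpen_Ioo
  have hsub : frontier E ⊆ {((0:ℝ) : AddCircle (1:ℝ))} ∪ {((u:ℝ) : AddCircle (1:ℝ))} := by
    intro z hz
    rw [hcl.frontier_eq] at hz
    obtain ⟨hzE, hzint⟩ := hz
    have hnotIoo : z ∉ (((↑) : ℝ → AddCircle (1:ℝ))) '' Set.Ioo 0 u := by
      intro hmem
      exact hzint (interior_maximal (Set.image_mono Set.Ioo_subset_Icc_self) hopen hmem)
    obtain ⟨x, hx, hxz⟩ := hzE
    rcases eq_or_lt_of_le hx.1 with h0 | h0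
    · left; rw [← hxz, ← h0]; rfl
    rcases eq_or_lt_of_le hx.2 with h1 | h1
    · right; rw [← hxz, h1]; rfl
    exact absurd ⟨x, ⟨h0, h1⟩, hxz⟩ hnotIoo
  refine le_antisymm ?_ zero_le
  calc (volume : Measure (AddCircle (1:ℝ))) (frontier E)
      ≤ volume ({((0:ℝ) : AddCircle (1:ℝ))} ∪ {((u:ℝ) : AddCircle (1:ℝ))}) :=
        measure_mono hsub
    _ ≤ volume {((0:ℝ) : AddCircle (1:ℝ))} + volume {((u:ℝ) : AddCircle (1:ℝ))} :=
        measure_union_le _ _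
    _ = 0 := by rw [addCircle_singleton_null, addCircle_singleton_null, add_zero]

lemma fourier_integral_volume_eq_zero {ℓ : ℤ} (hℓ : ℓ ≠ 0) :
    ∫ x : AddCircle (1:ℝ), fourier ℓ x ∂(volume : Measure (AddCircle (1:ℝ))) = 0 := by
  rw [← AddCircle.integral_preimage (1:ℝ) 0 (fun x => fourier ℓ x)]
  have heq : ∀ a : ℝ, (fourier ℓ ((a : ℝ) : AddCircle (1:ℝ)) : ℂ)
      = Complex.exp ((2 * Real.pi * Complex.I * ℓ) * a) := by
    intro a
    rw [fourier_coe_apply]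
    push_cast
    ring_nf
  simp_rw [heq]
  have h01 : (0:ℝ) ≤ 0 + 1 := by norm_num
  rw [← intervalIntegral.integral_of_le h01]
  have hc : (2 * Real.pi * Complex.I * ℓ) ≠ 0 := by
    simp [Real.pi_ne_zero, Complex.I_ne_zero, hℓ]
  rw [integral_exp_mul_complex hc]
  have : Complex.exp ((2 * Real.pi * Complex.I * ℓ) * (0 + 1 : ℝ)) = 1 := by
    have h2 : (2 * Real.pi * Complex.I * ℓ) * ((0:ℝ) + 1 : ℝ) = ℓ * (2 * Real.pi * Complex.I) := by
      push_cast; ring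
    rw [h2, Complex.exp_int_mul_two_pi_mul_I]
  rw [this]
  simp


lemma continuousMap_integrable (m : Measure (AddCircle (1:ℝ))) [IsProbabilityMeasure m]
    (q : C(AddCircle (1:ℝ), ℂ)) : Integrable (fun x => q x) m := by
  refine (integrable_const (‖q‖ : ℝ)).mono' q.continuous.measurable.aestronglyMeasurable ?_
  exact Filter.Eventually.of_forall fun x => q.norm_coe_le_norm x

lemma tendsto_integral_of_fourier (ν : ℕ → Measure (AddCircle (1:ℝ)))
    [∀ n, IsProbabilityMeasure (ν n)]
    (hf : ∀ ℓ : ℤ, ℓ ≠ 0 →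
      Tendsto (fun n => ∫ x, fourier ℓ x ∂(ν n)) atTop (nhds 0))
    (h : C(AddCircle (1:ℝ), ℂ)) :
    Tendsto (fun n => ∫ x, h x ∂(ν n)) atTop
      (nhds (∫ x, h x ∂(volume : Measure (AddCircle (1:ℝ))))) := by
  -- first, for members of the span of the fourier monomials
  have hspan : ∀ p ∈ Submodule.span ℂ (Set.range (@fourier 1)),
      Tendsto (fun n => ∫ x, p x ∂(ν n)) atTop
        (nhds (∫ x, p x ∂(volume : Measure (AddCircle (1:ℝ))))) := by
    intro p hp
    induction hp using Submodule.span_induction with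
    | mem q hq =>
      obtain ⟨ℓ, rfl⟩ := hq
      by_cases hℓ : ℓ = 0
      · subst hℓ
        have hone : ∀ (m : Measure (AddCircle (1:ℝ))) [IsProbabilityMeasure m],
            ∫ x, (fourier 0 : C(AddCircle (1:ℝ), ℂ)) x ∂m = 1 := by
          intro m _
          simp [fourier_zero]
        simp_rw [hone]
        exact tendsto_const_nhds
      · rw [fourier_integral_volume_eq_zero hℓ]
        exact hf ℓ hℓ
    | zero => simp
    | add q r hq hr ihq ihr =>
      have hint : ∀ (m : Measure (AddCircle (1:ℝ))) [IsProbabilityMeasure m],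
          ∫ x, (q + r) x ∂m = (∫ x, q x ∂m) + ∫ x, r x ∂m := by
        intro m _
        simp only [ContinuousMap.add_apply]
        exact integral_add (continuousMap_integrable m q) (continuousMap_integrable m r)
      simp_rw [hint]
      exact ihq.add ihr
    | smul a q hq ihq =>
      have hint : ∀ (m : Measure (AddCircle (1:ℝ))) [IsProbabilityMeasure m],
          ∫ x, (a • q) x ∂m = a • ∫ x, q x ∂m := by
        intro m _
        simp only [ContinuousMap.smul_apply]
        exact integral_smul a _
      simp_rw [hint]
      exact ihq.const_smul a
  -- density of the span
  rw [Metric.tendsto_atTop]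
  intro ε hε
  have hdense : h ∈ closure ((Submodule.span ℂ (Set.range (@fourier 1)) : Submodule ℂ _) : Set C(AddCircle (1:ℝ), ℂ)) := by
    have := span_fourier_closure_eq_top (T := 1)
    rw [← Submodule.topologicalClosure_coe, this]
    trivial
  obtain ⟨p, hpmem, hpdist⟩ := Metric.mem_closure_iff.mp hdense (ε / 3) (by linarith)
  have hbound : ∀ (m : Measure (AddCircle (1:ℝ))) [IsProbabilityMeasure m],
      dist (∫ x, h x ∂m) (∫ x, p x ∂m) ≤ ε / 3 := by
    intro m _
    rw [dist_eq_norm, ← integral_sub (continuousMap_integrable m h) (continuousMap_integrable m p)]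
    have := norm_integral_le_of_norm_le_const (μ := m) (C := ε / 3)
      (f := fun x => h x - p x)
      (Filter.Eventually.of_forall fun x => ?_)
    · simpa using this
    · have : dist (h x) (p x) ≤ dist h p := ContinuousMap.dist_apply_le_dist x
      rw [← dist_eq_norm]
      linarith
  obtain ⟨N, hN⟩ := Metric.tendsto_atTop.mp (hspan p hpmem) (ε / 3) (by linarith)
  refine ⟨N, fun n hn => ?_⟩
  calc dist (∫ x, h x ∂(ν n)) (∫ x, h x ∂(volume : Measure (AddCircle (1:ℝ))))
      ≤ dist (∫ x, h x ∂(ν n)) (∫ x, p x ∂(ν n))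
        + dist (∫ x, p x ∂(ν n)) (∫ x, p x ∂(volume : Measure (AddCircle (1:ℝ))))
        + dist (∫ x, p x ∂(volume : Measure (AddCircle (1:ℝ))))
            (∫ x, h x ∂(volume : Measure (AddCircle (1:ℝ)))) := dist_triangle4 _ _ _ _
    _ < ε := by
        have h1 := hbound (ν n)
        have h2 := hN n hn
        have h3 := hbound (volume : Measure (AddCircle (1:ℝ)))
        rw [dist_comm] at h3
        linarith


noncomputable def volP : ProbabilityMeasure (AddCircle (1:ℝ)) := ⟨volume, inferInstance⟩

lemma tendsto_probabilityMeasure (ν : ℕ → ProbabilityMeasure (AddCircle (1:ℝ)))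
    (hf : ∀ ℓ : ℤ, ℓ ≠ 0 →
      Tendsto (fun n => ∫ x, fourier ℓ x ∂(ν n : Measure (AddCircle (1:ℝ)))) atTop (nhds 0)) :
    Tendsto ν atTop (nhds volP) := by
  rw [ProbabilityMeasure.tendsto_iff_forall_integral_tendsto]
  intro f
  have key := tendsto_integral_of_fourier (fun n => (ν n : Measure (AddCircle (1:ℝ)))) hf
    (ContinuousMap.comp ⟨Complex.ofReal, Complex.continuous_ofReal⟩ f.toContinuousMap)
  have hconv : ∀ m : Measure (AddCircle (1:ℝ)),
      ∫ x, ((f x : ℝ) : ℂ) ∂m = ((∫ x, f x ∂m : ℝ) : ℂ) := fun m => integral_ofReal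
  simp only [ContinuousMap.comp_apply, ContinuousMap.coe_mk,
    BoundedContinuousFunction.coe_toContinuousMap] at key
  simp_rw [hconv] at key
  have := (Complex.continuous_re.tendsto _).comp key
  simp only [Function.comp_def, Complex.ofReal_re] at this
  exact this


/-- Product-Benfordness under the Mellin/characteristic-function regularity condition
(Section 4, underlying Theorem 1.4 and Corollary 1.9): if `P⁽¹⁾, P⁽²⁾, …` are i.i.d.
in `(0,1)` with a continuous density and the characteristic function `φ` of
`log_B P⁽¹⁾` satisfies `Σ_{ℓ≠0} |φ(2πℓ)|ⁿ → 0`, then the products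
`X⁽ⁿ⁾ = P⁽¹⁾⋯P⁽ⁿ⁾` converge to strong Benford behavior base `B`. -/
theorem product_benford_of_charFun_condition
    {Ω : Type*} [MeasurableSpace Ω] (μ : Measure Ω) [IsProbabilityMeasure μ]
    (B : ℝ) (hB : 1 < B)
    (P : ℕ → Ω → ℝ)
    (hmeas : ∀ t, Measurable (P t))
    (hval : ∀ t ω, P t ω ∈ Set.Ioo (0 : ℝ) 1)
    (hindep : iIndepFun P μ)
    (f : ℝ → ℝ)
    (hfcont : ContinuousOn f (Set.Ioo 0 1))
    (hpdf : ∀ t, μ.map (P t) = volume.withDensity (fun x => ENNReal.ofReal (f x)))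
    (φ : ℝ → ℂ)
    (hφ : ∀ k : ℝ, φ k = ∫ ω, Complex.exp (Complex.I * k * Real.logb B (P 0 ω)) ∂μ)
    (hcond : Tendsto
      (fun n : ℕ => ∑' ℓ : {ℓ : ℤ // ℓ ≠ 0}, ‖φ (2 * Real.pi * ((ℓ : ℤ) : ℝ))‖ ^ n)
      atTop (nhds 0)) :
    StrongBenford μ B (fun n ω => ∏ t ∈ Finset.range n, P t ω) := by
  have hB0 : (0:ℝ) < B := lt_trans zero_lt_one hB
  have hBne1 : B ≠ 1 := ne_of_gt hB
  intro D hD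
  obtain ⟨hD1, hDB⟩ := hD
  have hD0 : (0:ℝ) < D := lt_of_lt_of_le zero_lt_one hD1
  -- log of products is sum of logs
  have hlog : ∀ n ω, Real.logb B (∏ t ∈ Finset.range n, P t ω)
      = ∑ t ∈ Finset.range n, Real.logb B (P t ω) := by
    intro n ω
    unfold Real.logb
    rw [Real.log_prod (fun i _ => (hval i ω).1.ne'), Finset.sum_div]
  rcases eq_or_lt_of_le hDB with hDeq | hDlt
  · -- D = B : the event is everything
    subst hDeq
    have hsets : ∀ n : ℕ, {ω | significand D (∏ t ∈ Finset.range n, P t ω) ≤ D} = Set.univ := by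
      intro n
      apply Set.eq_univ_iff_forall.mpr
      intro ω
      show significand D _ ≤ D
      unfold significand
      have h1 : D ^ (Int.fract (Real.logb D (∏ t ∈ Finset.range n, P t ω))) < D ^ (1:ℝ) :=
        (Real.rpow_lt_rpow_left_iff hB).mpr (Int.fract_lt_one _)
      rw [Real.rpow_one] at h1
      exact h1.le
    simp only [hsets, measure_univ, ENNReal.toReal_one, Real.logb_self_eq_one hB]
    exact tendsto_const_nhds
  · -- D < B
    set u : ℝ := Real.logb B D with hu
    have hu0 : 0 ≤ u := Real.logb_nonneg hB hD1
    have hu1 : u < 1 := by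
      have := Real.logb_lt_logb hB hD0 hDlt
      rwa [Real.logb_self_eq_one hB] at this
    set E : Set (AddCircle (1:ℝ)) := (((↑) : ℝ → AddCircle (1:ℝ))) '' Set.Icc 0 u with hE
    have hEmeas : MeasurableSet E :=
      ((isCompact_Icc.image (AddCircle.continuous_mk' 1)).isClosed).measurableSet
    have mlog : ∀ t, Measurable fun ω => Real.logb B (P t ω) := by
      intro t
      show Measurable fun ω => Real.log (P t ω) / Real.log B
      exact (Real.measurable_log.comp (hmeas t)).div_const _
    have mS : ∀ n, Measurable fun ω => ∑ t ∈ Finset.range n, Real.logb B (P t ω) :=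
      fun n => Finset.measurable_sum _ (fun t _ => mlog t)
    have mSk : ∀ n, Measurable fun ω =>
        ((∑ t ∈ Finset.range n, Real.logb B (P t ω) : ℝ) : AddCircle (1:ℝ)) :=
      fun n => AddCircle.measurable_mk'.comp (mS n)
    -- event as preimage
    have hsetEq : ∀ n, {ω | significand B (∏ t ∈ Finset.range n, P t ω) ≤ D}
        = (fun ω => ((∑ t ∈ Finset.range n, Real.logb B (P t ω) : ℝ) : AddCircle (1:ℝ))) ⁻¹' E := by
      intro n
      ext ω
      simp only [Set.mem_setOf_eq, Set.mem_preimage, hE]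
      rw [mem_arc_iff_fract hu0 hu1]
      unfold significand
      rw [hlog n ω]
      constructor
      · intro h
        have hD' : D = B ^ u := (Real.rpow_logb hB0 hBne1 hD0).symm
        rw [hD'] at h
        exact (Real.rpow_le_rpow_left_iff hB).mp h
      · intro h
        have hD' : D = B ^ u := (Real.rpow_logb hB0 hBne1 hD0).symm
        rw [hD']
        exact (Real.rpow_le_rpow_left_iff hB).mpr h
    -- the pushforward measures on the circle
    set ν : ℕ → ProbabilityMeasure (AddCircle (1:ℝ)) := fun n =>
      ⟨μ.map (fun ω => ((∑ t ∈ Finset.range n, Real.logb B (P t ω) : ℝ) : AddCircle (1:ℝ))),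
        Measure.isProbabilityMeasure_map (mSk n).aemeasurable⟩ with hν
    -- Fourier coefficients tend to zero
    have hfourier : ∀ ℓ : ℤ, ℓ ≠ 0 →
        Tendsto (fun n => ∫ x, fourier ℓ x ∂(ν n : Measure (AddCircle (1:ℝ)))) atTop (nhds 0) := by
      intro ℓ hℓ
      set k : ℝ := 2 * Real.pi * (ℓ : ℝ) with hk
      have hk0 : k ≠ 0 := by
        have hℓ' : (ℓ:ℝ) ≠ 0 := Int.cast_ne_zero.mpr hℓ
        rw [hk]
        exact mul_ne_zero (mul_ne_zero two_ne_zero Real.pi_ne_zero) hℓ'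
      set g : ℝ → ℂ := fun x => Complex.exp (Complex.I * k * Real.logb B x) with hg
      have mg : Measurable g := by
        have mlogb : Measurable (Real.logb B) := by
          show Measurable fun x => Real.log x / Real.log B
          exact Real.measurable_log.div_const _
        exact Complex.measurable_exp.comp
          (measurable_const.mul (Complex.measurable_ofReal.comp mlogb))
      have hgb : ∀ x, ‖g x‖ ≤ 1 := by
        intro x
        rw [hg]
        simp only [Complex.norm_exp]
        have hre : (Complex.I * (k:ℂ) * ((Real.logb B x : ℝ) : ℂ)).re = 0 := by simp
        rw [hre, Real.exp_zero]
      have hpoint : ∀ n ω,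
          (fourier ℓ (((∑ t ∈ Finset.range n, Real.logb B (P t ω) : ℝ)) : AddCircle (1:ℝ)) : ℂ)
            = ∏ t ∈ Finset.range n, g (P t ω) := by
        intro n ω
        rw [fourier_coe_apply, hg]
        have hexp : (2:ℂ) * Real.pi * Complex.I * ℓ
              * ((∑ t ∈ Finset.range n, Real.logb B (P t ω) : ℝ) : ℂ) / ((1:ℝ):ℂ)
            = ∑ t ∈ Finset.range n, Complex.I * (k:ℂ) * ((Real.logb B (P t ω) : ℝ) : ℂ) := by
          rw [← Finset.mul_sum, hk]
          push_cast
          ring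
        rw [hexp, Complex.exp_sum]
      have hcalc : ∀ n, ∫ x, fourier ℓ x ∂(ν n : Measure (AddCircle (1:ℝ))) = (φ k) ^ n := by
        intro n
        show ∫ x, fourier ℓ x ∂(μ.map (fun ω =>
          ((∑ t ∈ Finset.range n, Real.logb B (P t ω) : ℝ) : AddCircle (1:ℝ)))) = _
        rw [integral_map (mSk n).aemeasurable
          (Continuous.aestronglyMeasurable (map_continuous (fourier ℓ)))]
        simp_rw [hpoint n]
        rw [integral_prod_eq_prod P hmeas hindep g mg hgb n]
        have hsame : ∀ t, ∫ ω, g (P t ω) ∂μ = ∫ ω, g (P 0 ω) ∂μ := fun t =>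
          integral_comp_eq_of_map_eq (hmeas t) (hmeas 0) (by rw [hpdf t, hpdf 0]) g mg
        calc ∏ t ∈ Finset.range n, ∫ ω, g (P t ω) ∂μ
            = ∏ t ∈ Finset.range n, ∫ ω, g (P 0 ω) ∂μ :=
              Finset.prod_congr rfl fun t _ => hsame t
          _ = (∫ ω, g (P 0 ω) ∂μ) ^ n := by rw [Finset.prod_const, Finset.card_range]
          _ = (φ k) ^ n := by rw [hφ k, hg]
      have hlt : ‖φ k‖ < 1 := by
        rw [hφ k]
        exact norm_charfun_lt_one μ hB (hmeas 0) (hpdf 0) hk0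
      simp_rw [hcalc]
      exact tendsto_pow_atTop_nhds_zero_of_norm_lt_one hlt
    -- weak convergence and portmanteau
    have hν_tendsto := tendsto_probabilityMeasure ν hfourier
    have hfr : (volP : Measure (AddCircle (1:ℝ))) (frontier E) = 0 := arc_frontier_null hu0 hu1
    have key := MeasureTheory.ProbabilityMeasure.tendsto_measure_of_null_frontier_of_tendsto'
      hν_tendsto hfr
    have hvol' : (volP : Measure (AddCircle (1:ℝ))) E = ENNReal.ofReal u :=
      arc_volume hu0 hu1
    rw [hvol'] at key
    have key2 := (ENNReal.tendsto_toReal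
      (by simp : (ENNReal.ofReal u) ≠ ⊤)).comp key
    rw [ENNReal.toReal_ofReal hu0] at key2
    have hmeasEq : ∀ n, μ {ω | significand B (∏ t ∈ Finset.range n, P t ω) ≤ D}
        = (ν n : Measure (AddCircle (1:ℝ))) E := by
      intro n
      rw [hsetEq n]
      exact (Measure.map_apply (mSk n) hEmeas).symm
    simp only [Function.comp_def] at key2
    simp only [hmeasEq]
    exact key2
end
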